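/- arXiv:1507.05184 — 3 statements merged into one kernel-verified Lean document; each statement's English description precedes it below -/
import Mathlib

section
/- For each n ≥ 2, the number of derangements of {1,...,n} with exactly one descent is 2^{n-2}. -/
open Polynomial Finset

/-- Values of a permutation of `Fin n` as a function `ℕ → ℕ` (0-indexed). -/
def permVal {n : ℕ} (π : Equiv.Perm (Fin n)) (i : ℕ) : ℕ :=
  if h : i < n then (π ⟨i, h⟩ : ℕ) else 0

/-- Number of descents of a permutation. -/
def desNum {n : ℕ} (π : Equiv.Perm (Fin n)) : ℕ :=
  ((Finset.range (n - 1)).filter (fun i => permVal π (i + 1) < permVal π i)).card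

/-- `π` contains the pattern given by the word `σ`. -/
def ContainsPat {n k : ℕ} (π : Equiv.Perm (Fin n)) (σ : Fin k → ℕ) : Prop :=
  ∃ f : Fin k → Fin n, (∀ i j : Fin k, i < j → f i < f j) ∧
    ∀ i j : Fin k, σ i < σ j ↔ π (f i) < π (f j)

/-- A separable permutation avoids both 2413 and 3142. -/
def SepPerm {n : ℕ} (π : Equiv.Perm (Fin n)) : Prop :=
  ¬ ContainsPat π ![2, 4, 1, 3] ∧ ¬ ContainsPat π ![3, 1, 4, 2]

open scoped Classical in
/-- Descent polynomial of separable permutations. -/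
noncomputable def sepPoly (n : ℕ) : Polynomial ℤ :=
  ∑ π ∈ Finset.univ.filter (fun π : Equiv.Perm (Fin n) => SepPerm π), X ^ desNum π


/-- Descent polynomial of derangements. -/
noncomputable def derPoly (n : ℕ) : Polynomial ℤ :=
  ∑ π ∈ Finset.univ.filter (fun π : Equiv.Perm (Fin n) => ∀ i, π i ≠ i), X ^ desNum π

/-- Number of derangements of `{1,...,n}` with exactly `k` descents. -/
def derDesCount (n k : ℕ) : ℕ :=
  (Finset.univ.filter
    (fun π : Equiv.Perm (Fin n) => (∀ i, π i ≠ i) ∧ desNum π = k)).card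

namespace DerOneDes

variable {m : ℕ}

/-- Gap bound for strictly monotone `Fin`-valued functions. -/
lemma sm_add {k l : ℕ} {f : Fin k → Fin l} (hf : StrictMono f) :
    ∀ (b : ℕ) (hb : b < k) (a : ℕ) (ha : a ≤ b),
      (f ⟨a, by omega⟩ : ℕ) + (b - a) ≤ (f ⟨b, hb⟩ : ℕ) := by
  intro b
  induction b with
  | zero => intro hb a ha; interval_cases a; simp
  | succ t ih =>
    intro hb a ha
    rcases Nat.lt_or_ge a (t + 1) with h | h
    · have h1 := ih (by omega) a (by omega)
      have h2 : f ⟨t, by omega⟩ < f ⟨t + 1, hb⟩ := hf (by simp [Fin.lt_def])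
      rw [Fin.lt_def] at h2
      omega
    · have : a = t + 1 := by omega
      subst this
      simp

lemma compl_card (s : Finset (Fin (m + 2))) : sᶜ.card = m + 2 - s.card := by
  simp [Finset.card_compl]

/-- The top element of `Fin (m+2)`. -/
def tp (m : ℕ) : Fin (m + 2) := ⟨m + 1, by omega⟩

lemma zero_ne_tp : (0 : Fin (m + 2)) ≠ tp m := by
  intro h
  have := congrArg Fin.val h
  simp [tp] at this

/-- The permutation with first increasing run the elements of `s`, then the rest. -/
def mkFun (s : Finset (Fin (m + 2))) : Fin (m + 2) → Fin (m + 2) := fun i =>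
  if h : (i : ℕ) < s.card then s.orderEmbOfFin rfl ⟨i, h⟩
  else sᶜ.orderEmbOfFin (compl_card s) ⟨(i : ℕ) - s.card, by have := i.isLt; omega⟩

lemma mkFun_inj (s : Finset (Fin (m + 2))) : Function.Injective (mkFun s) := by
  intro a b hab
  unfold mkFun at hab
  split_ifs at hab with h1 h2 h2
  · have := (s.orderEmbOfFin rfl).injective hab
    exact Fin.ext (by simpa [Fin.ext_iff] using this)
  · exact absurd (hab ▸ Finset.orderEmbOfFin_mem s rfl ⟨a, h1⟩)
      (by simpa using (Finset.mem_compl.mp (Finset.orderEmbOfFin_mem sᶜ (compl_card s) _)))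
  · exact absurd (hab ▸ Finset.orderEmbOfFin_mem sᶜ (compl_card s) ⟨(a : ℕ) - s.card, _⟩)
      (by simpa using (Finset.orderEmbOfFin_mem s rfl ⟨b, h2⟩))
  · have := (sᶜ.orderEmbOfFin (compl_card s)).injective hab
    have h := Fin.ext_iff.mp this
    simp only at h
    exact Fin.ext (by omega)

noncomputable def mkPerm (s : Finset (Fin (m + 2))) : Equiv.Perm (Fin (m + 2)) :=
  Equiv.ofBijective _ (Finite.injective_iff_bijective.mp (mkFun_inj s))

lemma mkPerm_lt (s : Finset (Fin (m + 2))) {i : Fin (m + 2)} (h : (i : ℕ) < s.card) :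
    mkPerm s i = s.orderEmbOfFin rfl ⟨i, h⟩ := by
  show mkFun s i = _
  unfold mkFun
  rw [dif_pos h]

lemma mkPerm_ge (s : Finset (Fin (m + 2))) {i : Fin (m + 2)} (h : ¬ (i : ℕ) < s.card) :
    mkPerm s i = sᶜ.orderEmbOfFin (compl_card s)
      ⟨(i : ℕ) - s.card, by have := i.isLt; omega⟩ := by
  show mkFun s i = _
  unfold mkFun
  rw [dif_neg h]

lemma mkPerm_val_lt (s : Finset (Fin (m + 2))) (i : ℕ) (hi : i < m + 2) (h : i < s.card) :
    ((mkPerm s ⟨i, hi⟩ : Fin (m + 2)) : ℕ) = (s.orderEmbOfFin rfl ⟨i, h⟩ : ℕ) := by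
  rw [mkPerm_lt s (show ((⟨i, hi⟩ : Fin (m + 2)) : ℕ) < s.card from h)]

lemma mkPerm_val_ge (s : Finset (Fin (m + 2))) (i : ℕ) (hi : i < m + 2) (h : ¬ i < s.card) :
    ((mkPerm s ⟨i, hi⟩ : Fin (m + 2)) : ℕ)
      = (sᶜ.orderEmbOfFin (compl_card s) ⟨i - s.card, by omega⟩ : ℕ) := by
  rw [mkPerm_ge s (show ¬ ((⟨i, hi⟩ : Fin (m + 2)) : ℕ) < s.card from h)]

lemma emb_mono (s : Finset (Fin (m + 2))) {a b : ℕ} (ha : a < s.card) (hb : b < s.card)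
    (hab : a < b) : (s.orderEmbOfFin rfl ⟨a, ha⟩ : ℕ) < (s.orderEmbOfFin rfl ⟨b, hb⟩ : ℕ) :=
  (s.orderEmbOfFin rfl).strictMono (show (⟨a, ha⟩ : Fin s.card) < ⟨b, hb⟩ from hab)

lemma cemb_mono (s : Finset (Fin (m + 2))) {a b : ℕ} (ha : a < m + 2 - s.card)
    (hb : b < m + 2 - s.card) (hab : a < b) :
    (sᶜ.orderEmbOfFin (compl_card s) ⟨a, ha⟩ : ℕ)
      < (sᶜ.orderEmbOfFin (compl_card s) ⟨b, hb⟩ : ℕ) :=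
  (sᶜ.orderEmbOfFin (compl_card s)).strictMono (show (⟨a, ha⟩ : Fin _) < ⟨b, hb⟩ from hab)

section Props

variable {s : Finset (Fin (m + 2))} (hs0 : (0 : Fin (m + 2)) ∉ s) (hst : tp m ∈ s)

include hst in
lemma card_pos' : 0 < s.card := card_pos.2 ⟨_, hst⟩

include hs0 in
lemma card_le' : s.card ≤ m + 1 := by
  by_contra h
  have h2 := s.card_le_univ
  simp only [card_univ, Fintype.card_fin] at h2
  have : s.card = Fintype.card (Fin (m + 2)) := by simp [Fintype.card_fin]; omega
  rw [Finset.card_eq_iff_eq_univ] at this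
  exact hs0 (this ▸ mem_univ _)

include hs0 in
lemma emb_gt : ∀ (a : ℕ) (ha : a < s.card), a < (s.orderEmbOfFin rfl ⟨a, ha⟩ : ℕ) := by
  intro a ha
  have hpos : 0 < s.card := by omega
  have h0 : 0 < (s.orderEmbOfFin rfl ⟨0, hpos⟩ : ℕ) := by
    rcases Nat.eq_zero_or_pos (s.orderEmbOfFin rfl ⟨0, hpos⟩ : ℕ) with h | h
    · exact absurd (Finset.orderEmbOfFin_mem s rfl ⟨0, hpos⟩)
        (by rw [show s.orderEmbOfFin rfl ⟨0, hpos⟩ = 0 from Fin.ext (by simp [h])]; exact hs0)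
    · exact h
  have := sm_add (s.orderEmbOfFin rfl).strictMono a ha 0 (Nat.zero_le _)
  omega

include hs0 hst in
lemma cemb_lt : ∀ (a : ℕ) (ha : a < m + 2 - s.card),
    (sᶜ.orderEmbOfFin (compl_card s) ⟨a, ha⟩ : ℕ) + (m + 1 - s.card - a) ≤ m := by
  intro a ha
  have hc1 : s.card ≤ m + 1 := card_le' hs0
  have hL : m + 1 - s.card < m + 2 - s.card := by omega
  have htop : (sᶜ.orderEmbOfFin (compl_card s) ⟨m + 1 - s.card, hL⟩ : ℕ) ≤ m := by
    have hmem := Finset.orderEmbOfFin_mem sᶜ (compl_card s) ⟨m + 1 - s.card, hL⟩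
    have hne : sᶜ.orderEmbOfFin (compl_card s) ⟨m + 1 - s.card, hL⟩ ≠ tp m := by
      intro h; rw [h] at hmem; exact (Finset.mem_compl.mp hmem) hst
    have hlt := (sᶜ.orderEmbOfFin (compl_card s) ⟨m + 1 - s.card, hL⟩).isLt
    have : (sᶜ.orderEmbOfFin (compl_card s) ⟨m + 1 - s.card, hL⟩ : ℕ) ≠ m + 1 := by
      intro h; exact hne (Fin.ext (by simp [tp, h]))
    omega
  have := sm_add (sᶜ.orderEmbOfFin (compl_card s)).strictMono (m + 1 - s.card) hL a (by omega)
  omega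

include hs0 in
lemma cemb_zero (ha : 0 < m + 2 - s.card) :
    (sᶜ.orderEmbOfFin (compl_card s) ⟨0, ha⟩ : ℕ) = 0 := by
  have h0 : (0 : Fin (m + 2)) ∈ sᶜ := Finset.mem_compl.mpr hs0
  have : (0 : Fin (m + 2)) ∈ Set.range (sᶜ.orderEmbOfFin (compl_card s)) := by
    rw [Finset.range_orderEmbOfFin]; exact_mod_cast h0
  obtain ⟨j, hj⟩ := this
  have := (sᶜ.orderEmbOfFin (compl_card s)).monotone
    (show (⟨0, ha⟩ : Fin _) ≤ j from by simp [Fin.le_def])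
  rw [hj] at this
  simpa using Fin.le_def.mp this

include hs0 hst in
lemma mkPerm_ne : ∀ i, mkPerm s i ≠ i := by
  intro i he
  have hc0 : 0 < s.card := card_pos' hst
  have hc1 : s.card ≤ m + 1 := card_le' hs0
  have hi := i.isLt
  by_cases h : (i : ℕ) < s.card
  · have h2 := emb_gt hs0 (i : ℕ) h
    rw [← mkPerm_val_lt s (i : ℕ) hi h] at h2
    rw [show (⟨(i : ℕ), hi⟩ : Fin (m + 2)) = i from Fin.ext rfl, he] at h2
    omega
  · have h2 := cemb_lt hs0 hst ((i : ℕ) - s.card) (by omega)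
    rw [← mkPerm_val_ge s (i : ℕ) hi h] at h2
    rw [show (⟨(i : ℕ), hi⟩ : Fin (m + 2)) = i from Fin.ext rfl, he] at h2
    omega

set_option maxHeartbeats 1000000 in
include hs0 hst in
lemma desNum_mkPerm : desNum (mkPerm s) = 1 := by
  have hc0 : 0 < s.card := card_pos' hst
  have hc1 : s.card ≤ m + 1 := card_le' hs0
  rw [desNum]
  have hn1 : m + 2 - 1 = m + 1 := rfl
  have hset : ((Finset.range (m + 2 - 1)).filter
      (fun i => permVal (mkPerm s) (i + 1) < permVal (mkPerm s) i)) = {s.card - 1} := by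
    ext i
    simp only [mem_filter, mem_range, mem_singleton, hn1]
    constructor
    · rintro ⟨h1, h2⟩
      rw [permVal, permVal, dif_pos (Nat.succ_lt_succ h1),
        dif_pos (Nat.lt_succ_of_lt h1)] at h2
      by_contra hne
      rcases Nat.lt_or_ge (i + 1) s.card with h | h
      · rw [mkPerm_val_lt s (i + 1) (Nat.succ_lt_succ h1) h,
          mkPerm_val_lt s i (Nat.lt_succ_of_lt h1) (Nat.lt_of_succ_lt h)] at h2
        have := emb_mono s (a := i) (b := i + 1) (Nat.lt_of_succ_lt h) h (by omega)
        omega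
      · have hge : s.card ≤ i := by omega
        rw [mkPerm_val_ge s (i + 1) (Nat.succ_lt_succ h1)
            (Nat.not_lt.mpr (Nat.le_succ_of_le hge)),
          mkPerm_val_ge s i (Nat.lt_succ_of_lt h1) (Nat.not_lt.mpr hge)] at h2
        have := cemb_mono s (a := i - s.card) (b := i + 1 - s.card) (by omega) (by omega)
          (by omega)
        omega
    · rintro rfl
      refine ⟨by omega, ?_⟩
      have hp1 : s.card - 1 + 1 < m + 2 := by omega
      have hp2 : s.card - 1 < m + 2 := by omega
      rw [permVal, permVal, dif_pos hp1, dif_pos hp2]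
      rw [mkPerm_val_ge s (s.card - 1 + 1) hp1 (by omega),
        mkPerm_val_lt s (s.card - 1) hp2 (by omega)]
      have hz : (sᶜ.orderEmbOfFin (compl_card s) ⟨s.card - 1 + 1 - s.card, by omega⟩ : ℕ)
          = 0 := by
        rw [show (⟨s.card - 1 + 1 - s.card, by omega⟩ : Fin (m + 2 - s.card))
          = ⟨0, by omega⟩ from Fin.ext (by simp only [Fin.mk.injEq]; omega)]
        exact cemb_zero hs0 (by omega)
      rw [hz]
      have := emb_gt hs0 (s.card - 1) (by omega)
      omega
  rw [hset, card_singleton]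

include hs0 in
lemma mkPerm_symm_zero :
    (mkPerm s).symm 0 = ⟨s.card, by have := card_le' hs0; omega⟩ := by
  have hc1 : s.card ≤ m + 1 := card_le' hs0
  rw [Equiv.symm_apply_eq]
  symm
  refine Fin.ext ?_
  rw [Fin.val_zero]
  rw [mkPerm_val_ge s s.card (by omega) (by omega)]
  rw [show (⟨s.card - s.card, by omega⟩ : Fin (m + 2 - s.card)) = ⟨0, by omega⟩
    from Fin.ext (by simp only [Fin.mk.injEq]; omega)]
  exact cemb_zero hs0 (by omega)

lemma mem_iff_symm_lt (s : Finset (Fin (m + 2))) (v : Fin (m + 2)) :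
    v ∈ s ↔ ((mkPerm s).symm v : ℕ) < s.card := by
  constructor
  · intro hv
    have : v ∈ Set.range (s.orderEmbOfFin rfl) := by
      rw [Finset.range_orderEmbOfFin]; exact_mod_cast hv
    obtain ⟨j, hj⟩ := this
    have hlt : (j : ℕ) < m + 2 := by
      have := j.isLt; have h2 := s.card_le_univ
      simp only [card_univ, Fintype.card_fin] at h2; omega
    have hmk : mkPerm s ⟨(j : ℕ), hlt⟩ = v := by
      refine Fin.ext ?_
      rw [mkPerm_val_lt s (j : ℕ) hlt j.isLt, ← hj]
    rw [← hmk, Equiv.symm_apply_apply]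
    exact j.isLt
  · intro hv
    have hv2 : ((mkPerm s).symm v : ℕ) < m + 2 := ((mkPerm s).symm v).isLt
    have hval : (v : ℕ) = (s.orderEmbOfFin rfl ⟨((mkPerm s).symm v : ℕ), hv⟩ : ℕ) := by
      conv_lhs => rw [← Equiv.apply_symm_apply (mkPerm s) v,
        show (mkPerm s).symm v = ⟨((mkPerm s).symm v : ℕ), hv2⟩ from Fin.ext rfl]
      rw [mkPerm_val_lt s _ hv2 hv]
    have hmem := Finset.orderEmbOfFin_mem s rfl ⟨((mkPerm s).symm v : ℕ), hv⟩
    rwa [show s.orderEmbOfFin rfl ⟨((mkPerm s).symm v : ℕ), hv⟩ = v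
      from Fin.ext hval.symm] at hmem

end Props

set_option maxHeartbeats 1000000 in
lemma master (π : Equiv.Perm (Fin (m + 2))) (hder : ∀ i, π i ≠ i) (hdes : desNum π = 1) :
    tp m ∈ (univ.filter fun v => ((π.symm v : ℕ) < (π.symm 0 : ℕ))) ∧
      (0 : Fin (m + 2)) ∉ (univ.filter fun v => ((π.symm v : ℕ) < (π.symm 0 : ℕ))) ∧
      mkPerm (univ.filter fun v => ((π.symm v : ℕ) < (π.symm 0 : ℕ))) = π := by
  rw [desNum] at hdes
  obtain ⟨d, hd⟩ := Finset.card_eq_one.mp hdes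
  have hdmem : d ∈ Finset.range (m + 2 - 1) ∧ permVal π (d + 1) < permVal π d := by
    have : d ∈ ({d} : Finset ℕ) := mem_singleton_self d
    rw [← hd] at this
    exact mem_filter.mp this
  have hdlt : d < m + 1 := by simpa using hdmem.1
  have hnd : ∀ i, i < m + 1 → i ≠ d → ¬ (permVal π (i + 1) < permVal π i) := by
    intro i h1 h2 hcon
    have : i ∈ ((Finset.range (m + 2 - 1)).filter
        (fun i => permVal π (i + 1) < permVal π i)) :=
      mem_filter.mpr ⟨mem_range.mpr (by omega), hcon⟩
    rw [hd, mem_singleton] at this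
    exact h2 this
  have incr : ∀ (i : ℕ) (h1 : i < m + 1), i ≠ d →
      (π ⟨i, Nat.lt_succ_of_lt h1⟩ : ℕ) < (π ⟨i + 1, Nat.succ_lt_succ h1⟩ : ℕ) := by
    intro i h1 h2
    have hn := hnd i h1 h2
    rw [permVal, permVal, dif_pos (Nat.succ_lt_succ h1), dif_pos (Nat.lt_succ_of_lt h1)] at hn
    have hne : (π ⟨i, Nat.lt_succ_of_lt h1⟩ : ℕ) ≠ (π ⟨i + 1, Nat.succ_lt_succ h1⟩ : ℕ) := by
      intro he
      have h4 := π.injective (Fin.ext he)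
      have h5 : i = i + 1 := congrArg Fin.val h4
      omega
    omega
  have hchain : ∀ (j : ℕ) (hj : j < m + 2) (i : ℕ) (hij : i < j), (j ≤ d ∨ d < i) →
      (π ⟨i, Nat.lt_trans hij hj⟩ : ℕ) < (π ⟨j, hj⟩ : ℕ) := by
    intro j
    induction j with
    | zero => omega
    | succ t ih =>
      intro hj i hij hcond
      rcases Nat.lt_or_ge i t with h | h
      · have h1 := ih (by omega) i h (by omega)
        have h2 := incr t (by omega) (by omega)
        omega
      · have : i = t := by omega
        subst this
        exact incr i (by omega) (by omega)
  have hs0v : ((π.symm 0 : Fin (m + 2)) : ℕ) = d + 1 := by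
    have hpi0 : π (π.symm 0) = 0 := Equiv.apply_symm_apply _ _
    have hpi0v : ((π (π.symm 0) : Fin (m + 2)) : ℕ) = 0 := by rw [hpi0]; rfl
    by_contra hne
    rcases Nat.lt_or_ge ((π.symm 0 : Fin (m + 2)) : ℕ) (d + 1) with h | h
    · rcases Nat.eq_zero_or_pos ((π.symm 0 : Fin (m + 2)) : ℕ) with h0 | h0
      · exact hder (π.symm 0) (by rw [hpi0]; exact Fin.ext (by simp [h0]))
      · have := hchain ((π.symm 0 : Fin (m + 2)) : ℕ) (π.symm 0).isLt 0 h0 (Or.inl (by omega))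
        rw [Fin.eta, hpi0v] at this
        omega
    · have hgt : d + 1 < ((π.symm 0 : Fin (m + 2)) : ℕ) := by omega
      have := hchain ((π.symm 0 : Fin (m + 2)) : ℕ) (π.symm 0).isLt (d + 1) hgt
        (Or.inr (by omega))
      rw [Fin.eta, hpi0v] at this
      omega
  have htp : ((π.symm (tp m) : Fin (m + 2)) : ℕ) ≤ d := by
    have hpi1 : π (π.symm (tp m)) = tp m := Equiv.apply_symm_apply _ _
    have hpi1v : ((π (π.symm (tp m)) : Fin (m + 2)) : ℕ) = m + 1 := by rw [hpi1]; rfl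
    by_contra h
    push_neg at h
    rcases Nat.lt_or_ge ((π.symm (tp m) : Fin (m + 2)) : ℕ) (m + 1) with hlt | hge
    · have := hchain (m + 1) (by omega) ((π.symm (tp m) : Fin (m + 2)) : ℕ) hlt (Or.inr h)
      rw [Fin.eta, hpi1v] at this
      have := (π ⟨m + 1, by omega⟩).isLt
      omega
    · have : ((π.symm (tp m) : Fin (m + 2)) : ℕ) = m + 1 := by
        have := (π.symm (tp m)).isLt; omega
      exact hder (π.symm (tp m)) (by rw [hpi1]; exact Fin.ext this.symm)
  refine ⟨mem_filter.mpr ⟨mem_univ _, by rw [hs0v]; omega⟩, by simp, ?_⟩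
  set S := (univ.filter fun v => ((π.symm v : ℕ) < (π.symm 0 : ℕ))) with hS
  have hmemS : ∀ v, v ∈ S ↔ ((π.symm v : Fin (m + 2)) : ℕ) ≤ d := by
    intro v
    rw [hS, mem_filter, hs0v]
    constructor
    · rintro ⟨-, h⟩; omega
    · intro h; exact ⟨mem_univ _, by omega⟩
  have hcardle : (univ.filter (fun i : Fin (m + 2) => (i : ℕ) ≤ d)).card = d + 1 := by
    have he : (univ.filter (fun i : Fin (m + 2) => (i : ℕ) ≤ d))
        = (univ : Finset (Fin (d + 1))).map (Fin.castLEEmb (by omega)) := by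
      ext a
      simp only [mem_filter, mem_univ, true_and, mem_map, Fin.castLEEmb_apply]
      constructor
      · intro ha; exact ⟨⟨(a : ℕ), by omega⟩, Fin.ext rfl⟩
      · rintro ⟨b, -, rfl⟩
        simpa using Nat.lt_succ_iff.mp b.isLt
    rw [he, card_map, card_univ, Fintype.card_fin]
  have hcardS : S.card = d + 1 := by
    have himg : S = (univ.filter (fun i : Fin (m + 2) => (i : ℕ) ≤ d)).image π := by
      ext v
      rw [hmemS, mem_image]
      constructor
      · intro h
        exact ⟨π.symm v, mem_filter.mpr ⟨mem_univ _, h⟩, Equiv.apply_symm_apply _ _⟩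
      · rintro ⟨i, hi, rfl⟩
        rw [Equiv.symm_apply_apply]
        exact (mem_filter.mp hi).2
    rw [himg, card_image_of_injective _ π.injective, hcardle]
  apply Equiv.ext
  intro x
  by_cases hx : (x : ℕ) < S.card
  · have huniq := Finset.orderEmbOfFin_unique (s := S) (rfl)
      (f := fun j : Fin S.card => π ⟨(j : ℕ), by have := j.isLt; omega⟩)
      (fun j => by
        rw [hmemS, Equiv.symm_apply_apply]
        show (j : ℕ) ≤ d
        have := j.isLt
        omega)
      (by
        intro a b hab
        have := hchain (b : ℕ) (by have := b.isLt; omega) (a : ℕ) hab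
          (Or.inl (by have := b.isLt; omega))
        exact this)
    rw [mkPerm_lt S hx, ← huniq]
  · have huniq := Finset.orderEmbOfFin_unique (s := Sᶜ) (compl_card S)
      (f := fun j : Fin (m + 2 - S.card) => π ⟨S.card + (j : ℕ), by
        have := j.isLt; omega⟩)
      (fun j => by
        rw [Finset.mem_compl, hmemS, Equiv.symm_apply_apply]
        show ¬ (S.card + (j : ℕ)) ≤ d
        have := j.isLt
        omega)
      (by
        intro a b hab
        have := hchain (S.card + (b : ℕ)) (by have := b.isLt; omega) (S.card + (a : ℕ))
          (by simpa using hab) (Or.inr (by omega))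
        exact this)
    rw [mkPerm_ge S hx, ← huniq]
    exact congrArg π (Fin.ext (show S.card + ((x : ℕ) - S.card) = (x : ℕ) by omega))

end DerOneDes

open DerOneDes in
theorem derDesCount_one_descent (n : ℕ) (hn : 2 ≤ n) :
    derDesCount n 1 = 2 ^ (n - 2) := by
  obtain ⟨m, rfl⟩ : ∃ m, n = m + 2 := ⟨n - 2, by omega⟩
  rw [show m + 2 - 2 = m from rfl]
  rw [derDesCount]
  set U : Finset (Fin (m + 2)) := (univ.erase (tp m)).erase 0 with hU
  have hUmem : ∀ v : Fin (m + 2), v ∈ U ↔ v ≠ 0 ∧ v ≠ tp m := by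
    intro v
    rw [hU, mem_erase, mem_erase]
    simp only [mem_univ, and_true]
  have hUcard : U.card = m := by
    have h1 : (0 : Fin (m + 2)) ∈ univ.erase (tp m) :=
      mem_erase.mpr ⟨zero_ne_tp, mem_univ _⟩
    rw [hU, card_erase_of_mem h1, card_erase_of_mem (mem_univ _), card_univ, Fintype.card_fin]
    rfl
  have hpow : U.powerset.card = 2 ^ m := by rw [card_powerset, hUcard]
  rw [← hpow]
  apply Finset.card_nbij'
    (i := fun π => (univ.filter fun v => ((π.symm v : ℕ) < (π.symm 0 : ℕ))).erase (tp m))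
    (j := fun T => mkPerm (insert (tp m) T))
  · -- hi
    intro π hπ
    beta_reduce
    rw [mem_coe, mem_filter] at hπ
    obtain ⟨-, hder, hdes⟩ := hπ
    obtain ⟨htpm, h0m, -⟩ := master π hder hdes
    rw [mem_coe, mem_powerset]
    intro v hv
    rw [mem_erase] at hv
    rw [hUmem]
    refine ⟨?_, hv.1⟩
    intro h
    rw [h] at hv
    exact h0m hv.2
  · -- hj
    intro T hT
    beta_reduce
    rw [mem_coe, mem_powerset] at hT
    have h0 : (0 : Fin (m + 2)) ∉ insert (tp m) T := by
      intro h
      rcases mem_insert.mp h with h | h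
      · exact zero_ne_tp h
      · exact ((hUmem 0).mp (hT h)).1 rfl
    have hst : tp m ∈ insert (tp m) T := mem_insert_self _ _
    rw [mem_coe, mem_filter]
    exact ⟨mem_univ _, mkPerm_ne h0 hst, desNum_mkPerm h0 hst⟩
  · -- left_inv
    intro π hπ
    beta_reduce
    rw [mem_coe, mem_filter] at hπ
    obtain ⟨-, hder, hdes⟩ := hπ
    obtain ⟨htpm, -, hmk⟩ := master π hder hdes
    rw [insert_erase htpm]
    exact hmk
  · -- right_inv
    intro T hT
    beta_reduce
    rw [mem_coe, mem_powerset] at hT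
    have h0 : (0 : Fin (m + 2)) ∉ insert (tp m) T := by
      intro h
      rcases mem_insert.mp h with h | h
      · exact zero_ne_tp h
      · exact ((hUmem 0).mp (hT h)).1 rfl
    have htpT : tp m ∉ T := fun h => ((hUmem _).mp (hT h)).2 rfl
    have hz := mkPerm_symm_zero (s := insert (tp m) T) h0
    have hfe : (univ.filter fun v =>
        (((mkPerm (insert (tp m) T)).symm v : ℕ)
          < ((mkPerm (insert (tp m) T)).symm 0 : ℕ))) = insert (tp m) T := by
      ext v
      rw [mem_filter, hz]
      constructor
      · rintro ⟨-, h⟩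
        exact (mem_iff_symm_lt _ v).mpr h
      · intro h
        exact ⟨mem_univ _, (mem_iff_symm_lt _ v).mp h⟩
    rw [hfe, erase_insert htpT]
end

section
/- For each n ≥ 1, the descent polynomial D_{2n}(t) of derangements of even length 2n is a monic polynomial of degree 2n-1, while D_{2n+1}(t) has degree 2n-1 (strictly less than 2n). -/
open Polynomial Finset

/- ---------------- auxiliary machinery ---------------- -/

lemma permVal_eq {m : ℕ} (π : Equiv.Perm (Fin m)) (i : ℕ) (h : i < m) :
    permVal π i = π ⟨i, h⟩ := dif_pos h

lemma desNum_le {m : ℕ} (π : Equiv.Perm (Fin m)) : desNum π ≤ m - 1 := by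
  unfold desNum
  exact (Finset.card_filter_le _ _).trans (by simp)

lemma coeff_derPoly (m k : ℕ) : (derPoly m).coeff k = (derDesCount m k : ℤ) := by
  unfold derPoly derDesCount
  rw [Polynomial.finset_sum_coeff]
  simp only [Polynomial.coeff_X_pow]
  have h1 : ∀ π : Equiv.Perm (Fin m),
      (if k = desNum π then (1:ℤ) else 0) = if desNum π = k then 1 else 0 := by
    intro π; simp [eq_comm]
  rw [Finset.sum_congr rfl fun π _ => h1 π, Finset.sum_boole, ← Finset.filter_filter]

lemma desNum_revPerm (m : ℕ) : desNum (Fin.revPerm : Equiv.Perm (Fin m)) = m - 1 := by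
  unfold desNum
  rw [Finset.filter_true_of_mem, Finset.card_range]
  intro i hi
  rw [Finset.mem_range] at hi
  rw [permVal_eq _ _ (by omega : i + 1 < m), permVal_eq _ _ (by omega : i < m)]
  show ((⟨i+1, _⟩ : Fin m).rev : ℕ) < ((⟨i, _⟩ : Fin m).rev : ℕ)
  rw [Fin.val_rev, Fin.val_rev]
  simp only
  omega

/-- Rigidity: a permutation with the maximal number of descents is the reversal. -/
lemma eq_revPerm {m : ℕ} (hm : 1 ≤ m) (π : Equiv.Perm (Fin m))
    (h : desNum π = m - 1) : π = Fin.revPerm := by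
  have hsub : (Finset.range (m - 1)).filter
      (fun i => permVal π (i + 1) < permVal π i) = Finset.range (m - 1) := by
    apply Finset.eq_of_subset_of_card_le (Finset.filter_subset _ _)
    rw [Finset.card_range]
    have := h; unfold desNum at this; omega
  have hd : ∀ i, i < m - 1 → permVal π (i + 1) < permVal π i := by
    intro i hi
    have : i ∈ (Finset.range (m - 1)).filter
        (fun i => permVal π (i + 1) < permVal π i) := by
      rw [hsub, Finset.mem_range]; exact hi
    exact (Finset.mem_filter.mp this).2
  have hstep : ∀ (i : ℕ) (h1 : i + 1 < m), (π ⟨i+1, h1⟩ : ℕ) < π ⟨i, by omega⟩ := by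
    intro i h1
    have := hd i (by omega)
    rwa [permVal_eq _ _ h1, permVal_eq _ _ (by omega : i < m)] at this
  have key : ∀ (jv : ℕ) (hj : jv < m) (i : Fin m), (i : ℕ) < jv →
      (π ⟨jv, hj⟩ : ℕ) < π i := by
    intro jv
    induction jv with
    | zero => intro _ i hi; omega
    | succ jv ih =>
      intro hj i hi
      have h1 : (π ⟨jv+1, hj⟩ : ℕ) < π ⟨jv, by omega⟩ := hstep jv hj
      rcases Nat.lt_or_ge (i : ℕ) jv with hl | hl
      · exact h1.trans (ih (by omega) i hl)
      · have hieq : i = ⟨jv, by omega⟩ := Fin.ext (by simp only [Fin.val_mk]; omega)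
        rw [hieq]; exact h1
  have hmono : StrictMono (fun i : Fin m => π i.rev) := by
    intro i j hij
    have hr : (j.rev : ℕ) < i.rev := Fin.rev_lt_rev.mpr hij
    have hk := key (i.rev : ℕ) i.rev.isLt j.rev hr
    have h2 : (⟨(i.rev : ℕ), i.rev.isLt⟩ : Fin m) = i.rev := rfl
    rw [h2] at hk
    exact Fin.lt_def.mpr hk
  have hrange : Set.range (fun i : Fin m => π i.rev) = Set.range (id : Fin m → Fin m) := by
    rw [Set.range_id]
    apply Function.Surjective.range_eq
    intro x
    exact ⟨(π.symm x).rev, by simp⟩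
  have hfeq : (fun i : Fin m => π i.rev) = id :=
    (StrictMono.range_inj hmono strictMono_id).mp hrange
  apply Equiv.ext
  intro i
  have := congrFun hfeq i.rev
  simp only [Fin.rev_rev, id] at this
  rw [this]
  rfl

lemma revPerm_derangement_even (n : ℕ) :
    ∀ i : Fin (2 * n), (Fin.revPerm : Equiv.Perm (Fin (2*n))) i ≠ i := by
  intro i h
  have hv := congrArg Fin.val h
  have hi := i.isLt
  rw [show ((Fin.revPerm i : Fin (2*n)) : ℕ) = i.rev from rfl, Fin.val_rev] at hv
  omega

lemma revPerm_fixed_odd (n : ℕ) :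
    ¬ (∀ i : Fin (2 * n + 1), (Fin.revPerm : Equiv.Perm (Fin (2*n+1))) i ≠ i) := by
  intro h
  apply h ⟨n, by omega⟩
  apply Fin.ext
  rw [show ((Fin.revPerm (⟨n, by omega⟩ : Fin (2*n+1)) : Fin (2*n+1)) : ℕ)
      = Fin.rev (⟨n, by omega⟩ : Fin (2*n+1)) from rfl, Fin.val_rev]
  simp only
  omega

/- ---------------- the odd construction ---------------- -/

def oddF (n i : ℕ) : ℕ := if i < n then 2*n - i else if i < 2*n then 2*n - 1 - i else n
def oddG (n v : ℕ) : ℕ := if v < n then 2*n - 1 - v else if v = n then 2*n else 2*n - v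

def oddPerm (n : ℕ) : Equiv.Perm (Fin (2*n+1)) where
  toFun i := ⟨oddF n i, by have := i.isLt; unfold oddF; split_ifs <;> omega⟩
  invFun v := ⟨oddG n v, by have := v.isLt; unfold oddG; split_ifs <;> omega⟩
  left_inv i := by
    have := i.isLt
    apply Fin.ext
    show oddG n (oddF n i) = i
    unfold oddF oddG
    split_ifs <;> omega
  right_inv v := by
    have := v.isLt
    apply Fin.ext
    show oddF n (oddG n v) = v
    unfold oddF oddG
    split_ifs <;> omega

lemma oddPerm_val (n : ℕ) (i : Fin (2*n+1)) : ((oddPerm n i : Fin (2*n+1)) : ℕ) = oddF n i := rfl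

lemma permVal_oddPerm (n i : ℕ) (h : i < 2*n+1) : permVal (oddPerm n) i = oddF n i := by
  rw [permVal_eq _ _ h, oddPerm_val]

lemma oddPerm_derangement (n : ℕ) (hn : 1 ≤ n) : ∀ i, oddPerm n i ≠ i := by
  intro i h
  have hv : oddF n (i : ℕ) = i := by
    rw [← oddPerm_val]; exact congrArg Fin.val h
  have hi := i.isLt
  unfold oddF at hv
  split_ifs at hv <;> omega

lemma desNum_oddPerm (n : ℕ) (hn : 1 ≤ n) : desNum (oddPerm n) = 2 * n - 1 := by
  unfold desNum
  have : (Finset.range (2*n+1-1)).filter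
      (fun i => permVal (oddPerm n) (i + 1) < permVal (oddPerm n) i)
      = Finset.range (2*n-1) := by
    ext a
    simp only [Finset.mem_filter, Finset.mem_range]
    constructor
    · rintro ⟨h1, h2⟩
      rw [permVal_oddPerm n (a+1) (by omega), permVal_oddPerm n a (by omega)] at h2
      unfold oddF at h2
      split_ifs at h2 <;> omega
    · intro h1
      refine ⟨by omega, ?_⟩
      rw [permVal_oddPerm n (a+1) (by omega), permVal_oddPerm n a (by omega)]
      unfold oddF
      split_ifs <;> omega
  rw [this, Finset.card_range]

/- ---------------- counting lemmas ---------------- -/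

lemma derDesCount_even (n : ℕ) (hn : 1 ≤ n) : derDesCount (2*n) (2*n-1) = 1 := by
  unfold derDesCount
  rw [Finset.card_eq_one]
  refine ⟨Fin.revPerm, ?_⟩
  ext π
  simp only [Finset.mem_filter, Finset.mem_univ, true_and, Finset.mem_singleton]
  constructor
  · rintro ⟨_, hd⟩
    exact eq_revPerm (by omega) π hd
  · rintro rfl
    exact ⟨revPerm_derangement_even n, by rw [desNum_revPerm]⟩

lemma derDesCount_odd_pos (n : ℕ) (hn : 1 ≤ n) : 0 < derDesCount (2*n+1) (2*n-1) := by
  unfold derDesCount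
  rw [Finset.card_pos]
  refine ⟨oddPerm n, ?_⟩
  simp only [Finset.mem_filter, Finset.mem_univ, true_and]
  exact ⟨oddPerm_derangement n hn, desNum_oddPerm n hn⟩

lemma desNum_le_odd {n : ℕ} (hn : 1 ≤ n) (π : Equiv.Perm (Fin (2*n+1)))
    (hder : ∀ i, π i ≠ i) : desNum π ≤ 2*n - 1 := by
  have h1 : desNum π ≤ 2*n := by have := desNum_le π; omega
  have h2 : desNum π ≠ 2*n := by
    intro h
    have : π = Fin.revPerm := eq_revPerm (by omega) π (by rw [h]; omega)
    exact revPerm_fixed_odd n (this ▸ hder)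
  omega

/- ---------------- main theorem ---------------- -/

theorem derPoly_degree (n : ℕ) (hn : 1 ≤ n) :
    (derPoly (2 * n)).Monic ∧ (derPoly (2 * n)).natDegree = 2 * n - 1 ∧
    (derPoly (2 * n + 1)).natDegree = 2 * n - 1 := by
  have hcoeffE : (derPoly (2*n)).coeff (2*n-1) = 1 := by
    rw [coeff_derPoly, derDesCount_even n hn]; norm_num
  have hleE : (derPoly (2*n)).natDegree ≤ 2*n - 1 := by
    apply Polynomial.natDegree_sum_le_of_forall_le
    intro π _
    rw [Polynomial.natDegree_X_pow]
    exact desNum_le π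
  have hdegE : (derPoly (2*n)).natDegree = 2*n - 1 :=
    le_antisymm hleE (Polynomial.le_natDegree_of_ne_zero (by rw [hcoeffE]; norm_num))
  have hmonic : (derPoly (2*n)).Monic := by
    show (derPoly (2*n)).leadingCoeff = 1
    rw [Polynomial.leadingCoeff, hdegE, hcoeffE]
  have hcoeffO : (derPoly (2*n+1)).coeff (2*n-1) ≠ 0 := by
    rw [coeff_derPoly]
    have hpos := derDesCount_odd_pos n hn
    exact_mod_cast Nat.pos_iff_ne_zero.mp hpos
  have hleO : (derPoly (2*n+1)).natDegree ≤ 2*n - 1 := by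
    apply Polynomial.natDegree_sum_le_of_forall_le
    intro π hπ
    rw [Polynomial.natDegree_X_pow]
    exact desNum_le_odd hn π (Finset.mem_filter.mp hπ).2
  have hdegO : (derPoly (2*n+1)).natDegree = 2*n - 1 :=
    le_antisymm hleO (Polynomial.le_natDegree_of_ne_zero hcoeffO)
  exact ⟨hmonic, hdegE, hdegO⟩
end

section
/- The descent polynomials of separable permutations satisfy, for n ≥ 2, the recurrence S_n(t) = (1+t) S_{n-1}(t) + t Σ_{j=1}^{n-2} S_j(t) ( S_{n-j-1}(t) + Σ_{i=1}^{n-j-1} S_i(t) S_{n-j-i}(t) ), with S_1(t) = 1. -/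
open Polynomial Finset

namespace SepAux

lemma permVal_eq {n : ℕ} (π : Equiv.Perm (Fin n)) (i : Fin n) : permVal π i = π i := by
  simp [permVal, i.isLt]

lemma permVal_lt {n : ℕ} (π : Equiv.Perm (Fin n)) {i : ℕ} (h : i < n) : permVal π i < n := by
  simp only [permVal, dif_pos h]; exact (π ⟨i, h⟩).isLt

lemma permVal_inj {n : ℕ} (π : Equiv.Perm (Fin n)) {i j : ℕ} (hi : i < n) (hj : j < n)
    (h : permVal π i = permVal π j) : i = j := by
  simp only [permVal, dif_pos hi, dif_pos hj] at h
  have := π.injective (Fin.ext h)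
  exact congrArg Fin.val this

lemma perm_ext_permVal {n : ℕ} {π ρ : Equiv.Perm (Fin n)}
    (h : ∀ i, i < n → permVal π i = permVal ρ i) : π = ρ := by
  ext x
  have := h x x.isLt
  simpa [permVal] using this

/-- direct sum of permutations -/
def dsum {a b : ℕ} (α : Equiv.Perm (Fin a)) (β : Equiv.Perm (Fin b)) :
    Equiv.Perm (Fin (a + b)) :=
  finSumFinEquiv.symm.trans ((Equiv.sumCongr α β).trans finSumFinEquiv)

/-- skew sum of permutations -/
def ssum {a b : ℕ} (α : Equiv.Perm (Fin a)) (β : Equiv.Perm (Fin b)) :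
    Equiv.Perm (Fin (a + b)) :=
  finSumFinEquiv.symm.trans ((Equiv.sumCongr α β).trans
    ((Equiv.sumComm (Fin a) (Fin b)).trans (finSumFinEquiv.trans (finCongr (Nat.add_comm b a)))))

lemma permVal_dsum_left {a b : ℕ} (α : Equiv.Perm (Fin a)) (β : Equiv.Perm (Fin b))
    {i : ℕ} (h : i < a) : permVal (dsum α β) i = permVal α i := by
  have hab : i < a + b := lt_of_lt_of_le h (Nat.le_add_right a b)
  simp only [permVal, dif_pos h, dif_pos hab, dsum, Equiv.trans_apply]
  have h1 : finSumFinEquiv.symm ⟨i, hab⟩ = Sum.inl ⟨i, h⟩ := by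
    rw [Equiv.symm_apply_eq]; simp [finSumFinEquiv]
  rw [h1]
  simp [finSumFinEquiv]

lemma permVal_dsum_right {a b : ℕ} (α : Equiv.Perm (Fin a)) (β : Equiv.Perm (Fin b))
    {i : ℕ} (h : i < b) : permVal (dsum α β) (a + i) = a + permVal β i := by
  have hab : a + i < a + b := by omega
  simp only [permVal, dif_pos h, dif_pos hab, dsum, Equiv.trans_apply]
  have h1 : finSumFinEquiv.symm ⟨a + i, hab⟩ = Sum.inr ⟨i, h⟩ := by
    rw [Equiv.symm_apply_eq]; simp [finSumFinEquiv]
  rw [h1]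
  simp [finSumFinEquiv]

lemma permVal_ssum_left {a b : ℕ} (α : Equiv.Perm (Fin a)) (β : Equiv.Perm (Fin b))
    {i : ℕ} (h : i < a) : permVal (ssum α β) i = b + permVal α i := by
  have hab : i < a + b := lt_of_lt_of_le h (Nat.le_add_right a b)
  simp only [permVal, dif_pos h, dif_pos hab, ssum, Equiv.trans_apply]
  have h1 : finSumFinEquiv.symm ⟨i, hab⟩ = Sum.inl ⟨i, h⟩ := by
    rw [Equiv.symm_apply_eq]; simp [finSumFinEquiv]
  rw [h1]
  simp [finSumFinEquiv, finCongr, Nat.add_comm]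

lemma permVal_ssum_right {a b : ℕ} (α : Equiv.Perm (Fin a)) (β : Equiv.Perm (Fin b))
    {i : ℕ} (h : i < b) : permVal (ssum α β) (a + i) = permVal β i := by
  have hab : a + i < a + b := by omega
  simp only [permVal, dif_pos h, dif_pos hab, ssum, Equiv.trans_apply]
  have h1 : finSumFinEquiv.symm ⟨a + i, hab⟩ = Sum.inr ⟨i, h⟩ := by
    rw [Equiv.symm_apply_eq]; simp [finSumFinEquiv]
  rw [h1]
  simp [finSumFinEquiv, finCongr]

end SepAux
namespace SepAux

lemma desNum_dsum {a b : ℕ} (ha : 0 < a) (hb : 0 < b)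
    (α : Equiv.Perm (Fin a)) (β : Equiv.Perm (Fin b)) :
    desNum (dsum α β) = desNum α + desNum β := by
  unfold desNum
  have hset : (Finset.range (a+b-1)).filter
        (fun i => permVal (dsum α β) (i+1) < permVal (dsum α β) i)
      = ((Finset.range (a-1)).filter (fun i => permVal α (i+1) < permVal α i)) ∪
        ((Finset.range (b-1)).filter (fun i => permVal β (i+1) < permVal β i)).image (a + ·) := by
    ext i
    simp only [Finset.mem_filter, Finset.mem_union, Finset.mem_image, Finset.mem_range]
    constructor
    · rintro ⟨hi, hQ⟩
      rcases lt_trichotomy i (a-1) with h|h|h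
      · left
        refine ⟨h, ?_⟩
        rwa [permVal_dsum_left α β (by omega), permVal_dsum_left α β (by omega)] at hQ
      · exfalso
        have h1 : permVal (dsum α β) (i+1) = a + permVal β 0 := by
          rw [show i + 1 = a + 0 by omega, permVal_dsum_right α β hb]
        have h2 : permVal (dsum α β) i = permVal α i := permVal_dsum_left α β (by omega)
        have := permVal_lt α (show i < a by omega)
        omega
      · right
        obtain ⟨j, rfl⟩ : ∃ j, i = a + j := ⟨i - a, by omega⟩
        refine ⟨j, ⟨by omega, ?_⟩, rfl⟩
        rwa [show a+j+1 = a+(j+1) by omega, permVal_dsum_right α β (by omega),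
          permVal_dsum_right α β (by omega), Nat.add_lt_add_iff_left] at hQ
    · rintro (⟨hi, hQ⟩|⟨j, ⟨hj, hQ⟩, rfl⟩)
      · exact ⟨by omega,
          by rwa [permVal_dsum_left α β (by omega), permVal_dsum_left α β (by omega)]⟩
      · refine ⟨by omega, ?_⟩
        rw [show a+j+1 = a+(j+1) by omega, permVal_dsum_right α β (by omega),
          permVal_dsum_right α β (by omega)]
        omega
  rw [hset, Finset.card_union_of_disjoint, Finset.card_image_of_injective _ (add_right_injective a)]
  rw [Finset.disjoint_left]
  intro x hx hx'
  simp only [Finset.mem_filter, Finset.mem_range, Finset.mem_image] at hx hx'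
  obtain ⟨j, _, rfl⟩ := hx'
  omega

lemma desNum_ssum {a b : ℕ} (ha : 0 < a) (hb : 0 < b)
    (α : Equiv.Perm (Fin a)) (β : Equiv.Perm (Fin b)) :
    desNum (ssum α β) = desNum α + desNum β + 1 := by
  unfold desNum
  have hset : (Finset.range (a+b-1)).filter
        (fun i => permVal (ssum α β) (i+1) < permVal (ssum α β) i)
      = insert (a-1)
        (((Finset.range (a-1)).filter (fun i => permVal α (i+1) < permVal α i)) ∪
        ((Finset.range (b-1)).filter (fun i => permVal β (i+1) < permVal β i)).image (a + ·)) := by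
    ext i
    simp only [Finset.mem_insert, Finset.mem_filter, Finset.mem_union, Finset.mem_image,
      Finset.mem_range]
    constructor
    · rintro ⟨hi, hQ⟩
      rcases lt_trichotomy i (a-1) with h|h|h
      · right; left
        refine ⟨h, ?_⟩
        rwa [permVal_ssum_left α β (by omega), permVal_ssum_left α β (by omega),
          Nat.add_lt_add_iff_left] at hQ
      · exact Or.inl h
      · right; right
        obtain ⟨j, rfl⟩ : ∃ j, i = a + j := ⟨i - a, by omega⟩
        refine ⟨j, ⟨by omega, ?_⟩, rfl⟩
        rwa [show a+j+1 = a+(j+1) by omega, permVal_ssum_right α β (by omega),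
          permVal_ssum_right α β (by omega)] at hQ
    · rintro (rfl|⟨hi, hQ⟩|⟨j, ⟨hj, hQ⟩, rfl⟩)
      · refine ⟨by omega, ?_⟩
        rw [show a-1+1 = a+0 by omega, permVal_ssum_right α β hb,
          permVal_ssum_left α β (by omega)]
        have := permVal_lt β hb
        omega
      · refine ⟨by omega, ?_⟩
        rw [permVal_ssum_left α β (by omega), permVal_ssum_left α β (by omega)]
        omega
      · refine ⟨by omega, ?_⟩
        rw [show a+j+1 = a+(j+1) by omega, permVal_ssum_right α β (by omega),
          permVal_ssum_right α β (by omega)]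
        exact hQ
  rw [hset, Finset.card_insert_of_notMem, Finset.card_union_of_disjoint,
    Finset.card_image_of_injective _ (add_right_injective a)]
  · rw [Finset.disjoint_left]
    intro x hx hx'
    simp only [Finset.mem_filter, Finset.mem_range, Finset.mem_image] at hx hx'
    obtain ⟨j, _, rfl⟩ := hx'
    omega
  · simp only [Finset.mem_union, Finset.mem_filter, Finset.mem_range, Finset.mem_image]
    rintro (⟨h, -⟩|⟨j, -, hj⟩) <;> omega

end SepAux
namespace SepAux

lemma containsPat_iff_permVal {n k : ℕ} (π : Equiv.Perm (Fin n)) (σ : Fin k → ℕ) :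
    ContainsPat π σ ↔ ∃ g : Fin k → ℕ, (∀ i, g i < n) ∧
      (∀ i j : Fin k, i < j → g i < g j) ∧
      (∀ i j : Fin k, σ i < σ j ↔ permVal π (g i) < permVal π (g j)) := by
  constructor
  · rintro ⟨f, hmono, hpat⟩
    refine ⟨fun i => (f i : ℕ), fun i => (f i).isLt, fun i j hij => hmono i j hij,
      fun i j => ?_⟩
    rw [hpat i j, Fin.lt_def, permVal_eq, permVal_eq]
  · rintro ⟨g, hlt, hmono, hpat⟩
    refine ⟨fun i => ⟨g i, hlt i⟩, fun i j hij => hmono i j hij, fun i j => ?_⟩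
    rw [hpat i j, Fin.lt_def]
    have e1 : permVal π (g i) = (π ⟨g i, hlt i⟩ : ℕ) := permVal_eq π ⟨g i, hlt i⟩
    have e2 : permVal π (g j) = (π ⟨g j, hlt j⟩ : ℕ) := permVal_eq π ⟨g j, hlt j⟩
    rw [e1, e2]

lemma containsPat_dsum_iff {a b : ℕ} (α : Equiv.Perm (Fin a)) (β : Equiv.Perm (Fin b))
    (σ : Fin 4 → ℕ)
    (hσ : ∀ P : Fin 4 → Bool, (∀ i j : Fin 4, i ≤ j → P j = true → P i = true) →
      (∀ i j, P i = true → P j = false → σ i < σ j) →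
      (∀ i, P i = true) ∨ (∀ i, P i = false)) :
    ContainsPat (dsum α β) σ ↔ ContainsPat α σ ∨ ContainsPat β σ := by
  simp only [containsPat_iff_permVal]
  constructor
  · rintro ⟨g, hlt, hmono, hpat⟩
    set P : Fin 4 → Bool := fun i => decide (g i < a) with hP
    have hmono' : ∀ i j : Fin 4, i ≤ j → g i ≤ g j := by
      intro i j hij
      rcases eq_or_lt_of_le hij with rfl|h
      · exact le_refl _
      · exact le_of_lt (hmono i j h)
    have hdc : ∀ i j : Fin 4, i ≤ j → P j = true → P i = true := by
      intro i j hij hj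
      simp only [hP, decide_eq_true_eq] at hj ⊢
      exact lt_of_le_of_lt (hmono' i j hij) hj
    have key : ∀ i j, P i = true → P j = false → σ i < σ j := by
      intro i j hi hj
      simp only [hP, decide_eq_true_eq, decide_eq_false_iff_not, not_lt] at hi hj
      rw [hpat, permVal_dsum_left α β hi,
        show g j = a + (g j - a) by omega, permVal_dsum_right α β (by have := hlt j; omega)]
      have := permVal_lt α hi
      omega
    rcases hσ P hdc key with hall | hall
    · left
      have hfa : ∀ i : Fin 4, g i < a := by
        intro i; have := hall i; simpa [hP] using this
      refine ⟨g, hfa, hmono, fun i j => ?_⟩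
      rw [hpat i j, permVal_dsum_left α β (hfa i), permVal_dsum_left α β (hfa j)]
    · right
      have hfa : ∀ i : Fin 4, a ≤ g i := by
        intro i; have := hall i; simpa [hP] using this
      refine ⟨fun i => g i - a, fun i => show g i - a < b by have := hlt i; have := hfa i; omega,
        fun i j hij => show g i - a < g j - a by
          have := hmono i j hij; have := hfa i; omega, fun i j => ?_⟩
      rw [hpat i j, show g i = a + (g i - a) by have := hfa i; omega,
        permVal_dsum_right α β (by have := hlt i; have := hfa i; omega),
        show g j = a + (g j - a) by have := hfa j; omega,
        permVal_dsum_right α β (by have := hlt j; have := hfa j; omega)]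
      beta_reduce
      omega
  · rintro (⟨g, hlt, hmono, hpat⟩ | ⟨g, hlt, hmono, hpat⟩)
    · refine ⟨g, fun i => lt_of_lt_of_le (hlt i) (Nat.le_add_right a b), hmono, fun i j => ?_⟩
      rw [hpat i j, permVal_dsum_left α β (hlt i), permVal_dsum_left α β (hlt j)]
    · refine ⟨fun i => a + g i, fun i => show a + g i < a + b by have := hlt i; omega,
        fun i j hij => show a + g i < a + g j by have := hmono i j hij; omega, fun i j => ?_⟩
      beta_reduce
      rw [hpat i j, permVal_dsum_right α β (hlt i), permVal_dsum_right α β (hlt j)]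
      omega

lemma containsPat_ssum_iff {a b : ℕ} (α : Equiv.Perm (Fin a)) (β : Equiv.Perm (Fin b))
    (σ : Fin 4 → ℕ)
    (hσ : ∀ P : Fin 4 → Bool, (∀ i j : Fin 4, i ≤ j → P j = true → P i = true) →
      (∀ i j, P i = true → P j = false → σ j < σ i) →
      (∀ i, P i = true) ∨ (∀ i, P i = false)) :
    ContainsPat (ssum α β) σ ↔ ContainsPat α σ ∨ ContainsPat β σ := by
  simp only [containsPat_iff_permVal]
  constructor
  · rintro ⟨g, hlt, hmono, hpat⟩
    set P : Fin 4 → Bool := fun i => decide (g i < a) with hP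
    have hmono' : ∀ i j : Fin 4, i ≤ j → g i ≤ g j := by
      intro i j hij
      rcases eq_or_lt_of_le hij with rfl|h
      · exact le_refl _
      · exact le_of_lt (hmono i j h)
    have hdc : ∀ i j : Fin 4, i ≤ j → P j = true → P i = true := by
      intro i j hij hj
      simp only [hP, decide_eq_true_eq] at hj ⊢
      exact lt_of_le_of_lt (hmono' i j hij) hj
    have key : ∀ i j, P i = true → P j = false → σ j < σ i := by
      intro i j hi hj
      simp only [hP, decide_eq_true_eq, decide_eq_false_iff_not, not_lt] at hi hj
      have hgj : g j - a < b := by have := hlt j; omega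
      have h1 : permVal (ssum α β) (g j) < permVal (ssum α β) (g i) := by
        rw [permVal_ssum_left α β hi,
          show g j = a + (g j - a) by omega, permVal_ssum_right α β hgj]
        have := permVal_lt β hgj
        omega
      exact (hpat j i).mpr h1
    rcases hσ P hdc key with hall | hall
    · left
      have hfa : ∀ i : Fin 4, g i < a := by
        intro i; have := hall i; simpa [hP] using this
      refine ⟨g, hfa, hmono, fun i j => ?_⟩
      rw [hpat i j, permVal_ssum_left α β (hfa i), permVal_ssum_left α β (hfa j)]
      omega
    · right
      have hfa : ∀ i : Fin 4, a ≤ g i := by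
        intro i; have := hall i; simpa [hP] using this
      refine ⟨fun i => g i - a, fun i => show g i - a < b by have := hlt i; have := hfa i; omega,
        fun i j hij => show g i - a < g j - a by
          have := hmono i j hij; have := hfa i; omega, fun i j => ?_⟩
      rw [hpat i j, show g i = a + (g i - a) by have := hfa i; omega,
        permVal_ssum_right α β (by have := hlt i; have := hfa i; omega),
        show g j = a + (g j - a) by have := hfa j; omega,
        permVal_ssum_right α β (by have := hlt j; have := hfa j; omega)]
  · rintro (⟨g, hlt, hmono, hpat⟩ | ⟨g, hlt, hmono, hpat⟩)
    · refine ⟨g, fun i => lt_of_lt_of_le (hlt i) (Nat.le_add_right a b), hmono, fun i j => ?_⟩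
      rw [hpat i j, permVal_ssum_left α β (hlt i), permVal_ssum_left α β (hlt j)]
      omega
    · refine ⟨fun i => a + g i, fun i => show a + g i < a + b by have := hlt i; omega,
        fun i j hij => show a + g i < a + g j by have := hmono i j hij; omega, fun i j => ?_⟩
      beta_reduce
      rw [hpat i j, permVal_ssum_right α β (hlt i), permVal_ssum_right α β (hlt j)]

lemma sepPerm_dsum_iff {a b : ℕ} (α : Equiv.Perm (Fin a)) (β : Equiv.Perm (Fin b)) :
    SepPerm (dsum α β) ↔ SepPerm α ∧ SepPerm β := by
  unfold SepPerm
  rw [containsPat_dsum_iff α β ![2,4,1,3] (by decide),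
    containsPat_dsum_iff α β ![3,1,4,2] (by decide)]
  tauto

lemma sepPerm_ssum_iff {a b : ℕ} (α : Equiv.Perm (Fin a)) (β : Equiv.Perm (Fin b)) :
    SepPerm (ssum α β) ↔ SepPerm α ∧ SepPerm β := by
  unfold SepPerm
  rw [containsPat_ssum_iff α β ![2,4,1,3] (by decide),
    containsPat_ssum_iff α β ![3,1,4,2] (by decide)]
  tauto

end SepAux
namespace SepAux

def CutS {n : ℕ} (π : Equiv.Perm (Fin n)) (m k : ℕ) : Prop :=
  ∀ i j : ℕ, i < k → k ≤ j → j < m → permVal π i < permVal π j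

def CutK {n : ℕ} (π : Equiv.Perm (Fin n)) (m k : ℕ) : Prop :=
  ∀ i j : ℕ, i < k → k ≤ j → j < m → permVal π j < permVal π i

lemma permVal_ne {n : ℕ} (π : Equiv.Perm (Fin n)) {i j : ℕ} (hi : i < n) (hj : j < n)
    (hij : i ≠ j) : permVal π i ≠ permVal π j :=
  fun h => hij (permVal_inj π hi hj h)

lemma decomp_aux {n : ℕ} (π : Equiv.Perm (Fin n)) (hsep : SepPerm π) :
    ∀ m, 2 ≤ m → m ≤ n → ∃ k, 1 ≤ k ∧ k < m ∧ (CutS π m k ∨ CutK π m k) := by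
  intro m hm
  induction m, hm using Nat.le_induction with
  | base =>
    intro h2n
    have hne := permVal_ne π (show 0 < n by omega) (show 1 < n by omega) (by omega)
    rcases Nat.lt_or_ge (permVal π 0) (permVal π 1) with h | h
    · exact ⟨1, le_rfl, by omega, Or.inl (fun i j hi hj hj' => by
        have : i = 0 := by omega
        have : j = 1 := by omega
        subst_vars; exact h)⟩
    · exact ⟨1, le_rfl, by omega, Or.inr (fun i j hi hj hj' => by
        have : i = 0 := by omega
        have : j = 1 := by omega
        subst_vars; omega)⟩
  | succ m hm ih =>
    intro hsn
    obtain ⟨k, hk1, hkm, hcut | hcut⟩ := ih (by omega)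
    · -- sum cut for prefix of length m
      by_cases hc : ∀ i, i < k → permVal π i < permVal π m
      · exact ⟨k, hk1, by omega, Or.inl (fun i j hi hj hj' => by
          rcases Nat.lt_or_ge j m with h | h
          · exact hcut i j hi hj h
          · have : j = m := by omega
            subst this; exact hc i hi)⟩
      · push_neg at hc
        obtain ⟨i0, hi0k, hi0⟩ := hc
        have hi0' : permVal π m < permVal π i0 := by
          have := permVal_ne π (show i0 < n by omega) (show m < n by omega) (by omega)
          omega
        have hmid : ∀ j, k ≤ j → j < m → permVal π m < permVal π j := fun j hj hj' =>
          lt_trans hi0' (hcut i0 j hi0k hj hj')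
        by_cases hL : ∃ p, p < k ∧ permVal π p < permVal π m
        · by_cases hHL : ∃ p p', p < p' ∧ p' < k ∧ permVal π m < permVal π p ∧
              permVal π p' < permVal π m
          · exfalso
            obtain ⟨p, p', hpp', hp'k, hp, hp'⟩ := hHL
            apply hsep.2
            rw [containsPat_iff_permVal]
            have hpk : permVal π p < permVal π k := hcut p k (by omega) le_rfl (by omega)
            refine ⟨![p, p', k, m], ?_, ?_, ?_⟩
            · intro t; fin_cases t <;> simp <;> omega
            · intro t s hts
              have hts' : (t : ℕ) < (s : ℕ) := hts
              fin_cases t <;> fin_cases s <;> simp_all <;> omega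
            · intro t s; fin_cases t <;> fin_cases s <;> simp <;> omega
          · push_neg at hHL
            obtain ⟨p0, hp0k, hp0⟩ := hL
            have hQ : ∃ i, permVal π m < permVal π i := ⟨i0, hi0'⟩
            have hk'le : Nat.find hQ ≤ i0 := Nat.find_min' hQ hi0'
            set k' := Nat.find hQ with hk'def
            have hk'spec : permVal π m < permVal π k' := Nat.find_spec hQ
            have hk'min : ∀ i, i < k' → ¬ permVal π m < permVal π i :=
              fun i hi => Nat.find_min hQ hi
            have hseg : ∀ i, k' ≤ i → i < k → permVal π m < permVal π i := by
              intro i hi hik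
              rcases eq_or_lt_of_le hi with rfl | h
              · exact hk'spec
              · by_contra hcon
                push_neg at hcon
                have hne := permVal_ne π (show i < n by omega) (show m < n by omega) (by omega)
                have h2 := hHL k' i h hik hk'spec
                omega
            have hk'1 : 1 ≤ k' := by
              by_contra h0
              have := hseg p0 (by omega) hp0k
              omega
            refine ⟨k', hk'1, by omega, Or.inl (fun i j hi hj hj' => ?_)⟩
            have hik : i < k := by omega
            have hvi : permVal π i < permVal π m := by
              have h1 := hk'min i hi
              have hne := permVal_ne π (show i < n by omega) (show m < n by omega) (by omega)
              omega
            rcases Nat.lt_or_ge j k with hjk | hjk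
            · exact lt_trans hvi (hseg j (by omega) hjk)
            · rcases Nat.lt_or_ge j m with h2 | h2
              · exact hcut i j hik hjk h2
              · have : j = m := by omega
                subst this; exact hvi
        · push_neg at hL
          refine ⟨m, by omega, by omega, Or.inr (fun i j hi hj hj' => ?_)⟩
          have hjm : j = m := by omega
          rw [hjm]
          rcases Nat.lt_or_ge i k with hik | hik
          · have h1 := hL i hik
            have hne := permVal_ne π (show m < n by omega) (show i < n by omega) (by omega)
            omega
          · exact hmid i hik (by omega)
    · -- skew cut for prefix of length m
      by_cases hc : ∀ i, i < k → permVal π m < permVal π i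
      · exact ⟨k, hk1, by omega, Or.inr (fun i j hi hj hj' => by
          rcases Nat.lt_or_ge j m with h | h
          · exact hcut i j hi hj h
          · have : j = m := by omega
            subst this; exact hc i hi)⟩
      · push_neg at hc
        obtain ⟨i0, hi0k, hi0⟩ := hc
        have hi0' : permVal π i0 < permVal π m := by
          have := permVal_ne π (show i0 < n by omega) (show m < n by omega) (by omega)
          omega
        have hmid : ∀ j, k ≤ j → j < m → permVal π j < permVal π m := fun j hj hj' =>
          lt_trans (hcut i0 j hi0k hj hj') hi0'
        by_cases hH : ∃ p, p < k ∧ permVal π m < permVal π p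
        · by_cases hHL : ∃ p p', p < p' ∧ p' < k ∧ permVal π p < permVal π m ∧
              permVal π m < permVal π p'
          · exfalso
            obtain ⟨p, p', hpp', hp'k, hp, hp'⟩ := hHL
            apply hsep.1
            rw [containsPat_iff_permVal]
            have hpk : permVal π k < permVal π p := hcut p k (by omega) le_rfl (by omega)
            refine ⟨![p, p', k, m], ?_, ?_, ?_⟩
            · intro t; fin_cases t <;> simp <;> omega
            · intro t s hts
              have hts' : (t : ℕ) < (s : ℕ) := hts
              fin_cases t <;> fin_cases s <;> simp_all <;> omega
            · intro t s; fin_cases t <;> fin_cases s <;> simp <;> omega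
          · push_neg at hHL
            obtain ⟨p0, hp0k, hp0⟩ := hH
            have hQ : ∃ i, permVal π i < permVal π m := ⟨i0, hi0'⟩
            have hk'le : Nat.find hQ ≤ i0 := Nat.find_min' hQ hi0'
            set k' := Nat.find hQ with hk'def
            have hk'spec : permVal π k' < permVal π m := Nat.find_spec hQ
            have hk'min : ∀ i, i < k' → ¬ permVal π i < permVal π m :=
              fun i hi => Nat.find_min hQ hi
            have hseg : ∀ i, k' ≤ i → i < k → permVal π i < permVal π m := by
              intro i hi hik
              rcases eq_or_lt_of_le hi with rfl | h
              · exact hk'spec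
              · by_contra hcon
                push_neg at hcon
                have hne := permVal_ne π (show i < n by omega) (show m < n by omega) (by omega)
                have h2 := hHL k' i h hik hk'spec
                omega
            have hk'1 : 1 ≤ k' := by
              by_contra h0
              have := hseg p0 (by omega) hp0k
              omega
            refine ⟨k', hk'1, by omega, Or.inr (fun i j hi hj hj' => ?_)⟩
            have hik : i < k := by omega
            have hvi : permVal π m < permVal π i := by
              have h1 := hk'min i hi
              have hne := permVal_ne π (show i < n by omega) (show m < n by omega) (by omega)
              omega
            rcases Nat.lt_or_ge j k with hjk | hjk
            · exact lt_trans (hseg j (by omega) hjk) hvi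
            · rcases Nat.lt_or_ge j m with h2 | h2
              · exact hcut i j hik hjk h2
              · have : j = m := by omega
                subst this; exact hvi
        · push_neg at hH
          refine ⟨m, by omega, by omega, Or.inl (fun i j hi hj hj' => ?_)⟩
          have hjm : j = m := by omega
          rw [hjm]
          rcases Nat.lt_or_ge i k with hik | hik
          · have h1 := hH i hik
            have hne := permVal_ne π (show i < n by omega) (show m < n by omega) (by omega)
            omega
          · exact hmid i hik (by omega)

lemma exists_cut {n : ℕ} (π : Equiv.Perm (Fin n)) (hsep : SepPerm π) (hn : 2 ≤ n) :
    ∃ k, 1 ≤ k ∧ k < n ∧ (CutS π n k ∨ CutK π n k) :=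
  decomp_aux π hsep n hn le_rfl

end SepAux
namespace SepAux

def glueS {n j : ℕ} (h : j ≤ n) (α : Equiv.Perm (Fin j)) (β : Equiv.Perm (Fin (n - j))) :
    Equiv.Perm (Fin n) :=
  (finCongr (by omega : j + (n - j) = n)).permCongr (dsum α β)

def glueK {n j : ℕ} (h : j ≤ n) (α : Equiv.Perm (Fin j)) (β : Equiv.Perm (Fin (n - j))) :
    Equiv.Perm (Fin n) :=
  (finCongr (by omega : j + (n - j) = n)).permCongr (ssum α β)

lemma permVal_permCongr {m n : ℕ} (e : m = n) (π : Equiv.Perm (Fin m)) (i : ℕ) :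
    permVal ((finCongr e).permCongr π) i = permVal π i := by
  rcases Nat.lt_or_ge i n with hi | hi
  · have hi' : i < m := by omega
    have hcast : ((finCongr e).symm ⟨i, hi⟩ : Fin m) = ⟨i, hi'⟩ := by
      apply Fin.ext; simp
    simp only [permVal, dif_pos hi, dif_pos hi', Equiv.permCongr_apply, hcast,
      finCongr_apply, Fin.coe_cast]
  · simp only [permVal, dif_neg (by omega : ¬ i < n), dif_neg (by omega : ¬ i < m)]

lemma permVal_glueS {n j : ℕ} (h : j ≤ n) (α : Equiv.Perm (Fin j))
    (β : Equiv.Perm (Fin (n - j))) (i : ℕ) :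
    permVal (glueS h α β) i = permVal (dsum α β) i := permVal_permCongr _ _ i

lemma permVal_glueK {n j : ℕ} (h : j ≤ n) (α : Equiv.Perm (Fin j))
    (β : Equiv.Perm (Fin (n - j))) (i : ℕ) :
    permVal (glueK h α β) i = permVal (ssum α β) i := permVal_permCongr _ _ i

lemma desNum_permCongr {m n : ℕ} (e : m = n) (π : Equiv.Perm (Fin m)) :
    desNum ((finCongr e).permCongr π) = desNum π := by
  unfold desNum
  subst e
  apply congrArg
  apply Finset.filter_congr
  intro i _
  simp only [permVal_permCongr]

lemma desNum_glueS {n j : ℕ} (hj : 1 ≤ j) (hjn : j < n) (α : Equiv.Perm (Fin j))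
    (β : Equiv.Perm (Fin (n - j))) :
    desNum (glueS (le_of_lt hjn) α β) = desNum α + desNum β := by
  rw [glueS, desNum_permCongr, desNum_dsum hj (by omega)]

lemma desNum_glueK {n j : ℕ} (hj : 1 ≤ j) (hjn : j < n) (α : Equiv.Perm (Fin j))
    (β : Equiv.Perm (Fin (n - j))) :
    desNum (glueK (le_of_lt hjn) α β) = desNum α + desNum β + 1 := by
  rw [glueK, desNum_permCongr, desNum_ssum hj (by omega)]

lemma containsPat_permCongr_iff {m n : ℕ} (e : m = n) (π : Equiv.Perm (Fin m))
    (σ : Fin 4 → ℕ) : ContainsPat ((finCongr e).permCongr π) σ ↔ ContainsPat π σ := by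
  rw [containsPat_iff_permVal, containsPat_iff_permVal]
  subst e
  constructor <;>
    · rintro ⟨g, h1, h2, h3⟩
      exact ⟨g, h1, h2, fun i j => by rw [h3 i j]; simp only [permVal_permCongr]⟩

lemma sepPerm_permCongr_iff {m n : ℕ} (e : m = n) (π : Equiv.Perm (Fin m)) :
    SepPerm ((finCongr e).permCongr π) ↔ SepPerm π := by
  unfold SepPerm
  rw [containsPat_permCongr_iff, containsPat_permCongr_iff]

lemma sepPerm_glueS_iff {n j : ℕ} (h : j ≤ n) (α : Equiv.Perm (Fin j))
    (β : Equiv.Perm (Fin (n - j))) :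
    SepPerm (glueS h α β) ↔ SepPerm α ∧ SepPerm β := by
  rw [glueS, sepPerm_permCongr_iff, sepPerm_dsum_iff]

lemma sepPerm_glueK_iff {n j : ℕ} (h : j ≤ n) (α : Equiv.Perm (Fin j))
    (β : Equiv.Perm (Fin (n - j))) :
    SepPerm (glueK h α β) ↔ SepPerm α ∧ SepPerm β := by
  rw [glueK, sepPerm_permCongr_iff, sepPerm_ssum_iff]

/-- the glued permutation has a sum cut at `j` -/
lemma cutS_glueS {n j : ℕ} (h : j ≤ n) (α : Equiv.Perm (Fin j))
    (β : Equiv.Perm (Fin (n - j))) : CutS (glueS h α β) n j := by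
  intro i i' hi hi' hi'n
  rw [permVal_glueS, permVal_glueS, permVal_dsum_left α β hi,
    show i' = j + (i' - j) by omega, permVal_dsum_right α β (by omega)]
  have := permVal_lt α hi
  omega

lemma cutK_glueK {n j : ℕ} (h : j ≤ n) (α : Equiv.Perm (Fin j))
    (β : Equiv.Perm (Fin (n - j))) : CutK (glueK h α β) n j := by
  intro i i' hi hi' hi'n
  rw [permVal_glueK, permVal_glueK, permVal_ssum_left α β hi,
    show i' = j + (i' - j) by omega, permVal_ssum_right α β (by omega)]
  have := permVal_lt β (show i' - j < n - j by omega)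
  omega

/-- transfer of small sum cuts -/
lemma cutS_glueS_iff {n j k : ℕ} (h : j ≤ n) (α : Equiv.Perm (Fin j))
    (β : Equiv.Perm (Fin (n - j))) (hk : k ≤ j) :
    CutS (glueS h α β) n k ↔ CutS α j k := by
  constructor
  · intro hc i i' hi hi' hi'j
    have := hc i i' hi hi' (by omega)
    rwa [permVal_glueS, permVal_glueS, permVal_dsum_left α β (by omega),
      permVal_dsum_left α β (by omega)] at this
  · intro hc i i' hi hi' hi'n
    rw [permVal_glueS, permVal_glueS, permVal_dsum_left α β (by omega)]
    rcases Nat.lt_or_ge i' j with h1 | h1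
    · rw [permVal_dsum_left α β h1]
      exact hc i i' hi hi' h1
    · rw [show i' = j + (i' - j) by omega, permVal_dsum_right α β (by omega)]
      have := permVal_lt α (show i < j by omega)
      omega

lemma cutK_glueK_iff {n j k : ℕ} (h : j ≤ n) (α : Equiv.Perm (Fin j))
    (β : Equiv.Perm (Fin (n - j))) (hk : k ≤ j) :
    CutK (glueK h α β) n k ↔ CutK α j k := by
  constructor
  · intro hc i i' hi hi' hi'j
    have := hc i i' hi hi' (by omega)
    rwa [permVal_glueK, permVal_glueK, permVal_ssum_left α β (by omega),
      permVal_ssum_left α β (by omega), Nat.add_lt_add_iff_left] at this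
  · intro hc i i' hi hi' hi'n
    rw [permVal_glueK, permVal_glueK]
    rcases Nat.lt_or_ge i' j with h1 | h1
    · rw [permVal_ssum_left α β (show i < j by omega), permVal_ssum_left α β h1]
      have := hc i i' hi hi' h1
      omega
    · rw [permVal_ssum_left α β (show i < j by omega),
        show i' = j + (i' - j) by omega, permVal_ssum_right α β (by omega)]
      have := permVal_lt β (show i' - j < n - j by omega)
      omega

/-- bounds forced by a sum cut -/
lemma cutS_low {n k : ℕ} {π : Equiv.Perm (Fin n)} (hc : CutS π n k) (hk : k ≤ n) :
    ∀ i, i < k → permVal π i < k := by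
  intro i hi
  have himg : (Finset.Ico k n).image (permVal π) ⊆ Finset.Ico (permVal π i + 1) n := by
    intro x hx
    simp only [Finset.mem_image, Finset.mem_Ico] at hx ⊢
    obtain ⟨t, ⟨ht1, ht2⟩, rfl⟩ := hx
    exact ⟨hc i t hi ht1 ht2, permVal_lt π ht2⟩
  have hcard : ((Finset.Ico k n).image (permVal π)).card = n - k := by
    rw [Finset.card_image_of_injOn, Nat.card_Ico]
    intro x hx y hy hxy
    simp only [Finset.mem_Ico, Finset.coe_Ico, Set.mem_Ico] at hx hy
    exact permVal_inj π (by omega) (by omega) hxy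
  have := Finset.card_le_card himg
  rw [hcard, Nat.card_Ico] at this
  have hvi := permVal_lt π (show i < n by omega)
  omega

lemma cutS_high {n k : ℕ} {π : Equiv.Perm (Fin n)} (hc : CutS π n k) (hk : k ≤ n) :
    ∀ i, k ≤ i → i < n → k ≤ permVal π i := by
  intro i hi hin
  have himg : (Finset.range k).image (permVal π) ⊆ Finset.range (permVal π i) := by
    intro x hx
    simp only [Finset.mem_image, Finset.mem_range] at hx ⊢
    obtain ⟨t, ht, rfl⟩ := hx
    exact hc t i ht hi hin
  have hcard : ((Finset.range k).image (permVal π)).card = k := by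
    rw [Finset.card_image_of_injOn, Finset.card_range]
    intro x hx y hy hxy
    simp only [Finset.coe_range, Set.mem_Iio] at hx hy
    exact permVal_inj π (by omega) (by omega) hxy
  have := Finset.card_le_card himg
  rw [hcard, Finset.card_range] at this
  omega

lemma cutK_low {n k : ℕ} {π : Equiv.Perm (Fin n)} (hc : CutK π n k) (hk : k ≤ n) :
    ∀ i, i < k → n - k ≤ permVal π i := by
  intro i hi
  have himg : (Finset.Ico k n).image (permVal π) ⊆ Finset.range (permVal π i) := by
    intro x hx
    simp only [Finset.mem_image, Finset.mem_Ico, Finset.mem_range] at hx ⊢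
    obtain ⟨t, ⟨ht1, ht2⟩, rfl⟩ := hx
    exact hc i t hi ht1 ht2
  have hcard : ((Finset.Ico k n).image (permVal π)).card = n - k := by
    rw [Finset.card_image_of_injOn, Nat.card_Ico]
    intro x hx y hy hxy
    simp only [Finset.coe_Ico, Set.mem_Ico] at hx hy
    exact permVal_inj π (by omega) (by omega) hxy
  have := Finset.card_le_card himg
  rw [hcard, Finset.card_range] at this
  omega

lemma cutK_high {n k : ℕ} {π : Equiv.Perm (Fin n)} (hc : CutK π n k) (hk : k ≤ n) :
    ∀ i, k ≤ i → i < n → permVal π i < n - k := by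
  intro i hi hin
  have himg : (Finset.range k).image (permVal π) ⊆ Finset.Ico (permVal π i + 1) n := by
    intro x hx
    simp only [Finset.mem_image, Finset.mem_range, Finset.mem_Ico] at hx ⊢
    obtain ⟨t, ht, rfl⟩ := hx
    exact ⟨hc t i ht hi hin, permVal_lt π (by omega)⟩
  have hcard : ((Finset.range k).image (permVal π)).card = k := by
    rw [Finset.card_image_of_injOn, Finset.card_range]
    intro x hx y hy hxy
    simp only [Finset.coe_range, Set.mem_Iio] at hx hy
    exact permVal_inj π (by omega) (by omega) hxy
  have := Finset.card_le_card himg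
  rw [hcard, Nat.card_Ico] at this
  have hvi := permVal_lt π hin
  omega

/-- a permutation cannot have both a sum cut and a skew cut -/
lemma not_cutS_cutK {n k l : ℕ} {π : Equiv.Perm (Fin n)}
    (hk1 : 1 ≤ k) (hkn : k < n) (hl1 : 1 ≤ l) (hln : l < n)
    (hS : CutS π n k) (hK : CutK π n l) : False := by
  have h1 := cutS_low hS (by omega) 0 (by omega)
  have h2 := cutK_low hK (by omega) 0 (by omega)
  have h3 := cutS_high hS (by omega) (n-1) (by omega) (by omega)
  have h4 := cutK_high hK (by omega) (n-1) (by omega) (by omega)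
  omega

end SepAux
namespace SepAux

lemma exists_glueS {n j : ℕ} (hj1 : 1 ≤ j) (hjn : j < n) (π : Equiv.Perm (Fin n))
    (hc : CutS π n j) :
    ∃ (α : Equiv.Perm (Fin j)) (β : Equiv.Perm (Fin (n - j))),
      π = glueS (le_of_lt hjn) α β := by
  have hlow := cutS_low hc (le_of_lt hjn)
  have hhigh := cutS_high hc (le_of_lt hjn)
  set fα : Fin j → Fin j := fun x => ⟨permVal π x, hlow x x.isLt⟩ with hfα
  have hinjα : Function.Injective fα := by
    intro x y hxy
    apply Fin.ext
    refine permVal_inj π (by have := x.isLt; omega) (by have := y.isLt; omega) ?_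
    exact congrArg Fin.val hxy
  set fβ : Fin (n - j) → Fin (n - j) :=
    fun x => ⟨permVal π (j + x) - j, by
      have h1 := permVal_lt π (show j + (x : ℕ) < n by have := x.isLt; omega)
      have h2 := hhigh (j + x) (by omega) (by have := x.isLt; omega)
      omega⟩ with hfβ
  have hinjβ : Function.Injective fβ := by
    intro x y hxy
    apply Fin.ext
    have h := congrArg Fin.val hxy
    simp only [hfβ] at h
    have h2x := hhigh (j + x) (by omega) (by have := x.isLt; omega)
    have h2y := hhigh (j + y) (by omega) (by have := y.isLt; omega)
    have := permVal_inj π (show j + (x:ℕ) < n by have := x.isLt; omega)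
      (show j + (y:ℕ) < n by have := y.isLt; omega) (by omega)
    omega
  set α : Equiv.Perm (Fin j) := Equiv.ofBijective fα (Finite.injective_iff_bijective.mp hinjα)
    with hα
  set β : Equiv.Perm (Fin (n - j)) :=
    Equiv.ofBijective fβ (Finite.injective_iff_bijective.mp hinjβ) with hβ
  have hαval : ∀ x : Fin j, α x = fα x := fun x => rfl
  have hβval : ∀ x : Fin (n - j), β x = fβ x := fun x => rfl
  refine ⟨α, β, perm_ext_permVal (fun i hi => ?_)⟩
  rw [permVal_glueS]
  rcases Nat.lt_or_ge i j with h1 | h1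
  · rw [permVal_dsum_left α β h1]
    have e : permVal α i = ((α ⟨i, h1⟩ : Fin j) : ℕ) := permVal_eq α ⟨i, h1⟩
    rw [e, hαval]
  · obtain ⟨t, rfl⟩ : ∃ t, i = j + t := ⟨i - j, by omega⟩
    have ht : t < n - j := by omega
    rw [permVal_dsum_right α β ht]
    have e : permVal β t = ((β ⟨t, ht⟩ : Fin (n - j)) : ℕ) := permVal_eq β ⟨t, ht⟩
    rw [e, hβval]
    have h2 := hhigh (j + t) (by omega) (by omega)
    have : ((fβ ⟨t, ht⟩ : Fin (n - j)) : ℕ) = permVal π (j + t) - j := rfl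
    omega

lemma exists_glueK {n j : ℕ} (hj1 : 1 ≤ j) (hjn : j < n) (π : Equiv.Perm (Fin n))
    (hc : CutK π n j) :
    ∃ (α : Equiv.Perm (Fin j)) (β : Equiv.Perm (Fin (n - j))),
      π = glueK (le_of_lt hjn) α β := by
  have hlow := cutK_low hc (le_of_lt hjn)
  have hhigh := cutK_high hc (le_of_lt hjn)
  set fα : Fin j → Fin j := fun x => ⟨permVal π x - (n - j), by
      have h1 := permVal_lt π (show (x : ℕ) < n by have := x.isLt; omega)
      have h2 := hlow x x.isLt
      omega⟩ with hfα
  have hinjα : Function.Injective fα := by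
    intro x y hxy
    apply Fin.ext
    have h := congrArg Fin.val hxy
    simp only [hfα] at h
    have h2x := hlow x x.isLt
    have h2y := hlow y y.isLt
    have := permVal_inj π (show (x:ℕ) < n by have := x.isLt; omega)
      (show (y:ℕ) < n by have := y.isLt; omega) (by omega)
    omega
  set fβ : Fin (n - j) → Fin (n - j) :=
    fun x => ⟨permVal π (j + x), hhigh (j + x) (by omega) (by have := x.isLt; omega)⟩ with hfβ
  have hinjβ : Function.Injective fβ := by
    intro x y hxy
    apply Fin.ext
    have h := congrArg Fin.val hxy
    simp only [hfβ] at h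
    have := permVal_inj π (show j + (x:ℕ) < n by have := x.isLt; omega)
      (show j + (y:ℕ) < n by have := y.isLt; omega) (by omega)
    omega
  set α : Equiv.Perm (Fin j) := Equiv.ofBijective fα (Finite.injective_iff_bijective.mp hinjα)
    with hα
  set β : Equiv.Perm (Fin (n - j)) :=
    Equiv.ofBijective fβ (Finite.injective_iff_bijective.mp hinjβ) with hβ
  have hαval : ∀ x : Fin j, α x = fα x := fun x => rfl
  have hβval : ∀ x : Fin (n - j), β x = fβ x := fun x => rfl
  refine ⟨α, β, perm_ext_permVal (fun i hi => ?_)⟩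
  rw [permVal_glueK]
  rcases Nat.lt_or_ge i j with h1 | h1
  · rw [permVal_ssum_left α β h1]
    have e : permVal α i = ((α ⟨i, h1⟩ : Fin j) : ℕ) := permVal_eq α ⟨i, h1⟩
    rw [e, hαval]
    have h2 := hlow i h1
    have : ((fα ⟨i, h1⟩ : Fin j) : ℕ) = permVal π i - (n - j) := rfl
    omega
  · obtain ⟨t, rfl⟩ : ∃ t, i = j + t := ⟨i - j, by omega⟩
    have ht : t < n - j := by omega
    rw [permVal_ssum_right α β ht]
    have e : permVal β t = ((β ⟨t, ht⟩ : Fin (n - j)) : ℕ) := permVal_eq β ⟨t, ht⟩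
    rw [e, hβval]

lemma glueS_injective {n j : ℕ} (h1 : 1 ≤ j) (hjn : j < n)
    {α α' : Equiv.Perm (Fin j)} {β β' : Equiv.Perm (Fin (n - j))}
    (h : glueS (le_of_lt hjn) α β = glueS (le_of_lt hjn) α' β') : α = α' ∧ β = β' := by
  have hv : ∀ i, permVal (dsum α β) i = permVal (dsum α' β') i := by
    intro i
    rw [← permVal_glueS (le_of_lt hjn), ← permVal_glueS (le_of_lt hjn), h]
  constructor
  · apply perm_ext_permVal
    intro i hi
    have := hv i
    rwa [permVal_dsum_left α β hi, permVal_dsum_left α' β' hi] at this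
  · apply perm_ext_permVal
    intro i hi
    have := hv (j + i)
    rw [permVal_dsum_right α β hi, permVal_dsum_right α' β' hi] at this
    omega

lemma glueK_injective {n j : ℕ} (h1 : 1 ≤ j) (hjn : j < n)
    {α α' : Equiv.Perm (Fin j)} {β β' : Equiv.Perm (Fin (n - j))}
    (h : glueK (le_of_lt hjn) α β = glueK (le_of_lt hjn) α' β') : α = α' ∧ β = β' := by
  have hv : ∀ i, permVal (ssum α β) i = permVal (ssum α' β') i := by
    intro i
    rw [← permVal_glueK (le_of_lt hjn), ← permVal_glueK (le_of_lt hjn), h]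
  constructor
  · apply perm_ext_permVal
    intro i hi
    have := hv i
    rw [permVal_ssum_left α β hi, permVal_ssum_left α' β' hi] at this
    omega
  · apply perm_ext_permVal
    intro i hi
    have := hv (j + i)
    rwa [permVal_ssum_right α β hi, permVal_ssum_right α' β' hi] at this

end SepAux
namespace SepAux

open scoped Classical

noncomputable def mcutS {n : ℕ} (π : Equiv.Perm (Fin n)) : ℕ :=
  if h : ∃ k, 1 ≤ k ∧ k < n ∧ CutS π n k then Nat.find h else n

noncomputable def mcutK {n : ℕ} (π : Equiv.Perm (Fin n)) : ℕ :=
  if h : ∃ k, 1 ≤ k ∧ k < n ∧ CutK π n k then Nat.find h else n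

def SumInd {n : ℕ} (π : Equiv.Perm (Fin n)) : Prop := ∀ k, 1 ≤ k → k < n → ¬ CutS π n k

def SkewInd {n : ℕ} (π : Equiv.Perm (Fin n)) : Prop := ∀ k, 1 ≤ k → k < n → ¬ CutK π n k

noncomputable def polyA (n : ℕ) : Polynomial ℤ :=
  ∑ π ∈ Finset.univ.filter (fun π : Equiv.Perm (Fin n) => SepPerm π ∧ SumInd π), X ^ desNum π

noncomputable def polyB (n : ℕ) : Polynomial ℤ :=
  ∑ π ∈ Finset.univ.filter (fun π : Equiv.Perm (Fin n) => SepPerm π ∧ SkewInd π), X ^ desNum π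

lemma mcutS_mem {n : ℕ} (hn : 1 ≤ n) (π : Equiv.Perm (Fin n)) :
    mcutS π ∈ Finset.Icc 1 n := by
  rw [Finset.mem_Icc]; unfold mcutS; split_ifs with h
  · have h1 := Nat.find_spec h
    exact ⟨h1.1, by have := h1.2.1; omega⟩
  · omega

lemma mcutK_mem {n : ℕ} (hn : 1 ≤ n) (π : Equiv.Perm (Fin n)) :
    mcutK π ∈ Finset.Icc 1 n := by
  rw [Finset.mem_Icc]; unfold mcutK; split_ifs with h
  · have h1 := Nat.find_spec h
    exact ⟨h1.1, by have := h1.2.1; omega⟩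
  · omega

lemma mcutS_eq_iff {n : ℕ} (π : Equiv.Perm (Fin n)) {j : ℕ} (hj1 : 1 ≤ j) (hj : j < n) :
    mcutS π = j ↔ (CutS π n j ∧ ∀ k, 1 ≤ k → k < j → ¬ CutS π n k) := by
  unfold mcutS; split_ifs with h
  · constructor
    · intro heq
      have hspec := Nat.find_spec h
      rw [heq] at hspec
      refine ⟨hspec.2.2, fun k hk1 hkj hc => ?_⟩
      have := Nat.find_min h (show k < Nat.find h by omega)
      exact this ⟨hk1, by omega, hc⟩
    · rintro ⟨hcut, hmin⟩
      have hle : Nat.find h ≤ j := Nat.find_min' h ⟨hj1, hj, hcut⟩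
      rcases eq_or_lt_of_le hle with heq | hlt
      · exact heq
      · exfalso
        have hspec := Nat.find_spec h
        exact hmin _ hspec.1 hlt hspec.2.2
  · constructor
    · intro h'; omega
    · rintro ⟨hcut, -⟩; exact absurd ⟨j, hj1, hj, hcut⟩ h

lemma mcutK_eq_iff {n : ℕ} (π : Equiv.Perm (Fin n)) {j : ℕ} (hj1 : 1 ≤ j) (hj : j < n) :
    mcutK π = j ↔ (CutK π n j ∧ ∀ k, 1 ≤ k → k < j → ¬ CutK π n k) := by
  unfold mcutK; split_ifs with h
  · constructor
    · intro heq
      have hspec := Nat.find_spec h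
      rw [heq] at hspec
      refine ⟨hspec.2.2, fun k hk1 hkj hc => ?_⟩
      have := Nat.find_min h (show k < Nat.find h by omega)
      exact this ⟨hk1, by omega, hc⟩
    · rintro ⟨hcut, hmin⟩
      have hle : Nat.find h ≤ j := Nat.find_min' h ⟨hj1, hj, hcut⟩
      rcases eq_or_lt_of_le hle with heq | hlt
      · exact heq
      · exfalso
        have hspec := Nat.find_spec h
        exact hmin _ hspec.1 hlt hspec.2.2
  · constructor
    · intro h'; omega
    · rintro ⟨hcut, -⟩; exact absurd ⟨j, hj1, hj, hcut⟩ h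

lemma mcutS_eq_n_iff {n : ℕ} (hn : 1 ≤ n) (π : Equiv.Perm (Fin n)) :
    mcutS π = n ↔ SumInd π := by
  unfold mcutS; split_ifs with h
  · constructor
    · intro heq
      have hspec := Nat.find_spec h
      have := hspec.2.1
      omega
    · intro hind
      exfalso
      obtain ⟨k, hk1, hkn, hc⟩ := h
      exact hind k hk1 hkn hc
  · constructor
    · intro _ k hk1 hkn hc; exact h ⟨k, hk1, hkn, hc⟩
    · intro _; rfl

lemma mcutK_eq_n_iff {n : ℕ} (hn : 1 ≤ n) (π : Equiv.Perm (Fin n)) :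
    mcutK π = n ↔ SkewInd π := by
  unfold mcutK; split_ifs with h
  · constructor
    · intro heq
      have hspec := Nat.find_spec h
      have := hspec.2.1
      omega
    · intro hind
      exfalso
      obtain ⟨k, hk1, hkn, hc⟩ := h
      exact hind k hk1 hkn hc
  · constructor
    · intro _ k hk1 hkn hc; exact h ⟨k, hk1, hkn, hc⟩
    · intro _; rfl

lemma fiber_glueS {n j : ℕ} (hj1 : 1 ≤ j) (hjn : j < n) :
    ∑ π ∈ (Finset.univ.filter (fun π : Equiv.Perm (Fin n) => SepPerm π)).filter
        (fun π => mcutS π = j), (X : Polynomial ℤ) ^ desNum π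
    = polyA j * sepPoly (n - j) := by
  have hprod : polyA j * sepPoly (n - j)
      = ∑ p ∈ (Finset.univ.filter (fun α : Equiv.Perm (Fin j) => SepPerm α ∧ SumInd α)) ×ˢ
          (Finset.univ.filter (fun β : Equiv.Perm (Fin (n - j)) => SepPerm β)),
          (X : Polynomial ℤ) ^ (desNum p.1 + desNum p.2) := by
    rw [polyA, sepPoly, Finset.sum_mul_sum, Finset.sum_product]
    exact Finset.sum_congr rfl (fun x _ => Finset.sum_congr rfl
      (fun y _ => (pow_add X _ _).symm))
  rw [hprod]
  refine (Finset.sum_bij (fun p _ => glueS (le_of_lt hjn) p.1 p.2) ?_ ?_ ?_ ?_).symm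
  · rintro ⟨α, β⟩ hp
    simp only [Finset.mem_product, Finset.mem_filter, Finset.mem_univ, true_and] at hp
    obtain ⟨⟨hsepα, hindα⟩, hsepβ⟩ := hp
    simp only [Finset.mem_filter, Finset.mem_univ, true_and]
    refine ⟨(sepPerm_glueS_iff _ α β).mpr ⟨hsepα, hsepβ⟩, ?_⟩
    rw [mcutS_eq_iff _ hj1 hjn]
    refine ⟨cutS_glueS _ α β, fun k hk1 hkj hc => ?_⟩
    exact hindα k hk1 hkj ((cutS_glueS_iff _ α β (by omega)).mp hc)
  · rintro ⟨α, β⟩ hp ⟨α', β'⟩ hp' heq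
    obtain ⟨h1, h2⟩ := glueS_injective hj1 hjn heq
    exact Prod.ext h1 h2
  · intro π hπ
    simp only [Finset.mem_filter, Finset.mem_univ, true_and] at hπ
    obtain ⟨hsep, hmc⟩ := hπ
    rw [mcutS_eq_iff _ hj1 hjn] at hmc
    obtain ⟨hcut, hmin⟩ := hmc
    obtain ⟨α, β, rfl⟩ := exists_glueS hj1 hjn π hcut
    have hsep' := (sepPerm_glueS_iff _ α β).mp hsep
    refine ⟨(α, β), ?_, rfl⟩
    simp only [Finset.mem_product, Finset.mem_filter, Finset.mem_univ, true_and]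
    refine ⟨⟨hsep'.1, fun k hk1 hkj hc => ?_⟩, hsep'.2⟩
    exact hmin k hk1 hkj ((cutS_glueS_iff _ α β (by omega)).mpr hc)
  · rintro ⟨α, β⟩ hp
    rw [desNum_glueS hj1 hjn]

lemma fiber_glueK {n j : ℕ} (hj1 : 1 ≤ j) (hjn : j < n) :
    ∑ π ∈ (Finset.univ.filter (fun π : Equiv.Perm (Fin n) => SepPerm π)).filter
        (fun π => mcutK π = j), (X : Polynomial ℤ) ^ desNum π
    = X * (polyB j * sepPoly (n - j)) := by
  have hprod : X * (polyB j * sepPoly (n - j))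
      = ∑ p ∈ (Finset.univ.filter (fun α : Equiv.Perm (Fin j) => SepPerm α ∧ SkewInd α)) ×ˢ
          (Finset.univ.filter (fun β : Equiv.Perm (Fin (n - j)) => SepPerm β)),
          (X : Polynomial ℤ) ^ (desNum p.1 + desNum p.2 + 1) := by
    rw [polyB, sepPoly, Finset.sum_mul_sum, Finset.mul_sum, Finset.sum_product]
    refine Finset.sum_congr rfl (fun x _ => ?_)
    rw [Finset.mul_sum]
    refine Finset.sum_congr rfl (fun y _ => ?_)
    rw [pow_add, pow_add, pow_one]
    ring
  rw [hprod]
  refine (Finset.sum_bij (fun p _ => glueK (le_of_lt hjn) p.1 p.2) ?_ ?_ ?_ ?_).symm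
  · rintro ⟨α, β⟩ hp
    simp only [Finset.mem_product, Finset.mem_filter, Finset.mem_univ, true_and] at hp
    obtain ⟨⟨hsepα, hindα⟩, hsepβ⟩ := hp
    simp only [Finset.mem_filter, Finset.mem_univ, true_and]
    refine ⟨(sepPerm_glueK_iff _ α β).mpr ⟨hsepα, hsepβ⟩, ?_⟩
    rw [mcutK_eq_iff _ hj1 hjn]
    refine ⟨cutK_glueK _ α β, fun k hk1 hkj hc => ?_⟩
    exact hindα k hk1 hkj ((cutK_glueK_iff _ α β (by omega)).mp hc)
  · rintro ⟨α, β⟩ hp ⟨α', β'⟩ hp' heq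
    obtain ⟨h1, h2⟩ := glueK_injective hj1 hjn heq
    exact Prod.ext h1 h2
  · intro π hπ
    simp only [Finset.mem_filter, Finset.mem_univ, true_and] at hπ
    obtain ⟨hsep, hmc⟩ := hπ
    rw [mcutK_eq_iff _ hj1 hjn] at hmc
    obtain ⟨hcut, hmin⟩ := hmc
    obtain ⟨α, β, rfl⟩ := exists_glueK hj1 hjn π hcut
    have hsep' := (sepPerm_glueK_iff _ α β).mp hsep
    refine ⟨(α, β), ?_, rfl⟩
    simp only [Finset.mem_product, Finset.mem_filter, Finset.mem_univ, true_and]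
    refine ⟨⟨hsep'.1, fun k hk1 hkj hc => ?_⟩, hsep'.2⟩
    exact hmin k hk1 hkj ((cutK_glueK_iff _ α β (by omega)).mpr hc)
  · rintro ⟨α, β⟩ hp
    rw [desNum_glueK hj1 hjn]

lemma A_identity {n : ℕ} (hn : 1 ≤ n) :
    sepPoly n = polyA n + ∑ j ∈ Finset.Icc 1 (n - 1), polyA j * sepPoly (n - j) := by
  rw [sepPoly,
    ← Finset.sum_fiberwise_of_maps_to (fun π _ => mcutS_mem hn π) (fun π => X ^ desNum π)]
  rw [show Finset.Icc 1 n = insert n (Finset.Icc 1 (n - 1)) from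
      Finset.ext (fun x => by simp only [Finset.mem_Icc, Finset.mem_insert]; omega),
    Finset.sum_insert (by simp only [Finset.mem_Icc]; omega)]
  congr 1
  · rw [polyA]
    apply Finset.sum_congr _ (fun _ _ => rfl)
    ext π
    simp only [Finset.mem_filter, Finset.mem_univ, true_and]
    rw [mcutS_eq_n_iff hn, and_comm]   -- careful: goal (SepPerm π ∧ mcutS = n) ↔ (SepPerm π ∧ SumInd π)
  · exact Finset.sum_congr rfl (fun j hj => by
      rw [Finset.mem_Icc] at hj
      exact fiber_glueS hj.1 (by omega))

lemma B_identity {n : ℕ} (hn : 1 ≤ n) :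
    sepPoly n = polyB n + X * ∑ j ∈ Finset.Icc 1 (n - 1), polyB j * sepPoly (n - j) := by
  rw [sepPoly,
    ← Finset.sum_fiberwise_of_maps_to (fun π _ => mcutK_mem hn π) (fun π => X ^ desNum π)]
  rw [show Finset.Icc 1 n = insert n (Finset.Icc 1 (n - 1)) from
      Finset.ext (fun x => by simp only [Finset.mem_Icc, Finset.mem_insert]; omega),
    Finset.sum_insert (by simp only [Finset.mem_Icc]; omega)]
  congr 1
  · rw [polyB]
    apply Finset.sum_congr _ (fun _ _ => rfl)
    ext π
    simp only [Finset.mem_filter, Finset.mem_univ, true_and]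
    rw [mcutK_eq_n_iff hn, and_comm]
  · rw [Finset.mul_sum]
    exact Finset.sum_congr rfl (fun j hj => by
      rw [Finset.mem_Icc] at hj
      exact fiber_glueK hj.1 (by omega))

lemma C_identity {n : ℕ} (hn : 2 ≤ n) : sepPoly n = polyA n + polyB n := by
  rw [sepPoly, polyA, polyB]
  have hunion : Finset.univ.filter (fun π : Equiv.Perm (Fin n) => SepPerm π)
      = Finset.univ.filter (fun π : Equiv.Perm (Fin n) => SepPerm π ∧ SumInd π) ∪
        Finset.univ.filter (fun π : Equiv.Perm (Fin n) => SepPerm π ∧ SkewInd π) := by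
    ext π
    simp only [Finset.mem_filter, Finset.mem_univ, true_and, Finset.mem_union]
    constructor
    · intro hsep
      by_cases hind : SumInd π
      · exact Or.inl ⟨hsep, hind⟩
      · refine Or.inr ⟨hsep, fun l hl1 hln hK => ?_⟩
        simp only [SumInd, not_forall] at hind
        obtain ⟨k, hk1, hkn, hS⟩ := hind
        exact not_cutS_cutK hk1 hkn hl1 hln (not_not.mp hS) hK
    · rintro (⟨h, -⟩ | ⟨h, -⟩) <;> exact h
  have hdisj : Disjoint
      (Finset.univ.filter (fun π : Equiv.Perm (Fin n) => SepPerm π ∧ SumInd π))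
      (Finset.univ.filter (fun π : Equiv.Perm (Fin n) => SepPerm π ∧ SkewInd π)) := by
    rw [Finset.disjoint_left]
    intro π h1 h2
    simp only [Finset.mem_filter, Finset.mem_univ, true_and] at h1 h2
    obtain ⟨k, hk1, hkn, hcut | hcut⟩ := exists_cut π h1.1 hn
    · exact h1.2 k hk1 hkn hcut
    · exact h2.2 k hk1 hkn hcut
  rw [hunion, Finset.sum_union hdisj]

lemma sepPerm_one (π : Equiv.Perm (Fin 1)) : SepPerm π := by
  constructor <;> rintro ⟨f, hmono, -⟩ <;>
    exact absurd (hmono 0 1 (by decide)) (by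
      have h : f 0 = f 1 := Subsingleton.elim _ _
      simp [h])

lemma sepPoly_one : sepPoly 1 = 1 := by
  rw [sepPoly, Finset.filter_true_of_mem (fun π _ => sepPerm_one π)]
  have hdes : ∀ π : Equiv.Perm (Fin 1), desNum π = 0 := fun π => by simp [desNum]
  rw [Finset.sum_congr rfl (fun π _ => by rw [hdes π, pow_zero]), Finset.sum_const,
    Finset.card_univ]
  simp

lemma polyA_one : polyA 1 = 1 := by
  rw [polyA, Finset.filter_true_of_mem (fun π _ => ⟨sepPerm_one π, fun k h1 h2 => by omega⟩)]
  have hdes : ∀ π : Equiv.Perm (Fin 1), desNum π = 0 := fun π => by simp [desNum]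
  rw [Finset.sum_congr rfl (fun π _ => by rw [hdes π, pow_zero]), Finset.sum_const,
    Finset.card_univ]
  simp

lemma polyB_one : polyB 1 = 1 := by
  rw [polyB, Finset.filter_true_of_mem (fun π _ => ⟨sepPerm_one π, fun k h1 h2 => by omega⟩)]
  have hdes : ∀ π : Equiv.Perm (Fin 1), desNum π = 0 := fun π => by simp [desNum]
  rw [Finset.sum_congr rfl (fun π _ => by rw [hdes π, pow_zero]), Finset.sum_const,
    Finset.card_univ]
  simp

end SepAux
namespace SepAux

noncomputable def sS : PowerSeries (Polynomial ℤ) :=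
  PowerSeries.mk (fun n => if n = 0 then 0 else sepPoly n)

noncomputable def aS : PowerSeries (Polynomial ℤ) :=
  PowerSeries.mk (fun n => if n = 0 then 0 else polyA n)

noncomputable def bS : PowerSeries (Polynomial ℤ) :=
  PowerSeries.mk (fun n => if n = 0 then 0 else polyB n)

lemma coeff_sS (n : ℕ) :
    PowerSeries.coeff (R := Polynomial ℤ) n sS = if n = 0 then 0 else sepPoly n :=
  PowerSeries.coeff_mk n _

lemma coeff_aS (n : ℕ) :
    PowerSeries.coeff (R := Polynomial ℤ) n aS = if n = 0 then 0 else polyA n :=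
  PowerSeries.coeff_mk n _

lemma coeff_bS (n : ℕ) :
    PowerSeries.coeff (R := Polynomial ℤ) n bS = if n = 0 then 0 else polyB n :=
  PowerSeries.coeff_mk n _

lemma coeff_mul_pos (F G : PowerSeries (Polynomial ℤ))
    (hF : PowerSeries.coeff (R := Polynomial ℤ) 0 F = 0)
    (hG : PowerSeries.coeff (R := Polynomial ℤ) 0 G = 0) (n : ℕ) :
    PowerSeries.coeff (R := Polynomial ℤ) n (F * G)
      = ∑ j ∈ Finset.Icc 1 (n - 1),
          PowerSeries.coeff (R := Polynomial ℤ) j F * PowerSeries.coeff (R := Polynomial ℤ) (n - j) G := by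
  rw [PowerSeries.coeff_mul, Finset.Nat.sum_antidiagonal_eq_sum_range_succ_mk]
  refine (Finset.sum_subset ?_ ?_).symm
  · intro x hx; rw [Finset.mem_Icc] at hx; rw [Finset.mem_range]; omega
  · intro x hx hnx
    rw [Finset.mem_range] at hx; rw [Finset.mem_Icc] at hnx
    rcases Nat.eq_zero_or_pos x with rfl | hx0
    · rw [hF, zero_mul]
    · have hxn : x = n := by omega
      subst hxn
      rw [show x - x = 0 by omega, hG, mul_zero]

lemma rel1 : sS = aS + aS * sS := by
  refine PowerSeries.ext fun n => ?_
  rw [map_add, coeff_mul_pos aS sS (by simp [coeff_aS]) (by simp [coeff_sS]), coeff_sS, coeff_aS]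
  rcases Nat.eq_zero_or_pos n with rfl | hn
  · simp
  · rw [if_neg (by omega), if_neg (by omega), A_identity hn]
    congr 1
    refine Finset.sum_congr rfl (fun j hj => ?_)
    rw [Finset.mem_Icc] at hj
    rw [coeff_aS, coeff_sS, if_neg (by omega), if_neg (by omega)]

lemma rel2 : sS = bS + PowerSeries.C (R := Polynomial ℤ) X * (bS * sS) := by
  refine PowerSeries.ext fun n => ?_
  rw [map_add, PowerSeries.coeff_C_mul,
    coeff_mul_pos bS sS (by simp [coeff_bS]) (by simp [coeff_sS]), coeff_sS, coeff_bS]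
  rcases Nat.eq_zero_or_pos n with rfl | hn
  · simp
  · rw [if_neg (by omega), if_neg (by omega), B_identity hn]
    congr 2
    refine Finset.sum_congr rfl (fun j hj => ?_)
    rw [Finset.mem_Icc] at hj
    rw [coeff_bS, coeff_sS, if_neg (by omega), if_neg (by omega)]

lemma rel3 : aS + bS = PowerSeries.X + sS := by
  refine PowerSeries.ext fun n => ?_
  rw [map_add, map_add, coeff_aS, coeff_bS, coeff_sS, PowerSeries.coeff_X]
  rcases Nat.eq_zero_or_pos n with rfl | hn
  · simp
  · rcases Nat.lt_or_ge n 2 with hn2 | hn2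
    · have : n = 1 := by omega
      subst this
      simp [polyA_one, polyB_one, sepPoly_one]
    · rw [if_neg (by omega), if_neg (by omega), if_neg (by omega), if_neg (by omega),
        C_identity hn2, zero_add]

lemma key : sS = PowerSeries.X + PowerSeries.X * sS
    + PowerSeries.C (R := Polynomial ℤ) X * (PowerSeries.X * sS)
    + PowerSeries.C (R := Polynomial ℤ) X * (PowerSeries.X * (sS * sS))
    + PowerSeries.C (R := Polynomial ℤ) X * (sS * (sS * sS)) := by
  have h1 := rel1
  have h2 := rel2
  have h3 := rel3
  linear_combination (1 + PowerSeries.C (R := Polynomial ℤ) X * sS) * h1 + (1 + sS) * h2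
    + (1 + sS) * (1 + PowerSeries.C (R := Polynomial ℤ) X * sS) * h3

lemma coeff_ss (n : ℕ) : PowerSeries.coeff (R := Polynomial ℤ) n (sS * sS)
    = ∑ i ∈ Finset.Icc 1 (n - 1), sepPoly i * sepPoly (n - i) := by
  rw [coeff_mul_pos sS sS (by simp [coeff_sS]) (by simp [coeff_sS])]
  refine Finset.sum_congr rfl (fun i hi => ?_)
  rw [Finset.mem_Icc] at hi
  rw [coeff_sS, coeff_sS, if_neg (by omega), if_neg (by omega)]

lemma main {n : ℕ} (hn : 2 ≤ n) :
    sepPoly n = (1 + X) * sepPoly (n - 1)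
      + X * ∑ j ∈ Finset.Icc 1 (n - 2), sepPoly j *
          (sepPoly (n - j - 1)
            + ∑ i ∈ Finset.Icc 1 (n - j - 1), sepPoly i * sepPoly (n - j - i)) := by
  have e := congrArg (PowerSeries.coeff (R := Polynomial ℤ) n) key
  rw [map_add, map_add, map_add, map_add, PowerSeries.coeff_X, if_neg (by omega),
    PowerSeries.coeff_C_mul, PowerSeries.coeff_C_mul, PowerSeries.coeff_C_mul,
    coeff_sS, if_neg (by omega)] at e
  obtain ⟨m, hm⟩ : ∃ m, n = m + 1 := ⟨n - 1, by omega⟩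
  have eXs : PowerSeries.coeff (R := Polynomial ℤ) n (PowerSeries.X * sS) = sepPoly (n - 1) := by
    rw [hm, PowerSeries.coeff_succ_X_mul, coeff_sS, if_neg (by omega),
      show m + 1 - 1 = m from by omega]
  have eXss : PowerSeries.coeff (R := Polynomial ℤ) n (PowerSeries.X * (sS * sS))
      = ∑ j ∈ Finset.Icc 1 (n - 2), sepPoly j * sepPoly (n - 1 - j) := by
    rw [hm, PowerSeries.coeff_succ_X_mul, coeff_ss,
      show m + 1 - 2 = m - 1 from by omega]
    refine Finset.sum_congr rfl (fun j hj => ?_)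
    rw [show m + 1 - 1 - j = m - j from by omega]
  have esss : PowerSeries.coeff (R := Polynomial ℤ) n (sS * (sS * sS))
      = ∑ j ∈ Finset.Icc 1 (n - 1), sepPoly j *
          (∑ i ∈ Finset.Icc 1 (n - j - 1), sepPoly i * sepPoly (n - j - i)) := by
    rw [coeff_mul_pos sS (sS * sS) (by simp [coeff_sS])
      (by rw [coeff_ss]; simp) n]
    refine Finset.sum_congr rfl (fun j hj => ?_)
    rw [Finset.mem_Icc] at hj
    rw [coeff_sS, if_neg (by omega), coeff_ss]
  rw [eXs, eXss, esss] at e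
  rw [e]
  -- now pure polynomial algebra over finite sums
  have htrim : ∑ j ∈ Finset.Icc 1 (n - 1), sepPoly j *
        (∑ i ∈ Finset.Icc 1 (n - j - 1), sepPoly i * sepPoly (n - j - i))
      = ∑ j ∈ Finset.Icc 1 (n - 2), sepPoly j *
        (∑ i ∈ Finset.Icc 1 (n - j - 1), sepPoly i * sepPoly (n - j - i)) := by
    refine (Finset.sum_subset ?_ ?_).symm
    · intro x hx; rw [Finset.mem_Icc] at hx ⊢; omega
    · intro x hx hnx
      rw [Finset.mem_Icc] at hx hnx
      have hx1 : n - x - 1 = 0 := by omega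
      rw [hx1, Finset.Icc_eq_empty (by omega), Finset.sum_empty, mul_zero]
  rw [htrim]
  have hsplit : ∀ j ∈ Finset.Icc 1 (n - 2), sepPoly j *
        (sepPoly (n - j - 1) + ∑ i ∈ Finset.Icc 1 (n - j - 1), sepPoly i * sepPoly (n - j - i))
      = sepPoly j * sepPoly (n - 1 - j)
        + sepPoly j * (∑ i ∈ Finset.Icc 1 (n - j - 1), sepPoly i * sepPoly (n - j - i)) := by
    intro j hj
    rw [mul_add, show n - 1 - j = n - j - 1 by omega]
  rw [Finset.sum_congr rfl hsplit, Finset.sum_add_distrib]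
  ring

end SepAux

theorem sepPoly_recurrence :
    sepPoly 1 = 1 ∧
    ∀ n : ℕ, 2 ≤ n →
      sepPoly n = (1 + X) * sepPoly (n - 1)
        + X * ∑ j ∈ Finset.Icc 1 (n - 2), sepPoly j *
            (sepPoly (n - j - 1)
              + ∑ i ∈ Finset.Icc 1 (n - j - 1), sepPoly i * sepPoly (n - j - i)) :=
  ⟨SepAux.sepPoly_one, fun _ hn => SepAux.main hn⟩
end
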